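/- arXiv:2305.17543 — 5 statements merged into one kernel-verified Lean document; each statement's English description precedes it below -/
import Mathlib

section
/- Let r ≥ 1 and n ≥ 0 be integers, and let λ be a partition with |λ| = n(r+1), ℓ(λ) ≤ r, and λ_r ≥ n. Let μ = (λ_1 − λ_r, λ_2 − λ_r, …, λ_{r−1} − λ_r) be the partition obtained from λ by deleting its first λ_r columns (each of height r). Then the Kostka number K_{λ,(n)^{r+1}} equals the number of SSYT of shape μ with entries in {1, …, r}. -/
open Finset

/-- A filling `T` of the Young diagram of `lam` (0-indexed rows and columns, with
junk value `0` outside the diagram) is a semistandard Young tableau. -/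
def IsSSYT (lam : ℕ → ℕ) (T : ℕ → ℕ → ℕ) : Prop :=
  (∀ i j, j < lam i → 1 ≤ T i j) ∧
  (∀ i j, j + 1 < lam i → T i j ≤ T i (j + 1)) ∧
  (∀ i j, j < lam (i + 1) → T i j < T (i + 1) j) ∧
  (∀ i j, lam i ≤ j → T i j = 0)

/-- The number of occurrences of the value `v` in the filling `T` of the diagram of `lam`. -/
noncomputable def content (lam : ℕ → ℕ) (T : ℕ → ℕ → ℕ) (v : ℕ) : ℕ :=
  Set.ncard {p : ℕ × ℕ | p.2 < lam p.1 ∧ T p.1 p.2 = v}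

/-- The Kostka number `K_{lam, (n)^m}`: the number of SSYT of shape `lam` in which each of
the values `1, …, m` occurs exactly `n` times and no other values occur. -/
noncomputable def kostka (lam : ℕ → ℕ) (n m : ℕ) : ℕ :=
  Set.ncard {T : ℕ → ℕ → ℕ | IsSSYT lam T ∧ (∀ i j, j < lam i → T i j ≤ m) ∧
    ∀ v, 1 ≤ v → v ≤ m → content lam T v = n}

/-- The number of SSYT of shape `lam` with entries in `{1, …, r}`. -/
noncomputable def ssytCount (lam : ℕ → ℕ) (r : ℕ) : ℕ :=
  Set.ncard {T : ℕ → ℕ → ℕ | IsSSYT lam T ∧ ∀ i j, j < lam i → T i j ≤ r}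

/-- The number of SSYT of shape `lam` with entries in `{1, …, r}` and content `mu`
(the value `v+1` occurring exactly `mu v` times, `v : Fin r`). -/
noncomputable def kostkaC (lam : ℕ → ℕ) (r : ℕ) (mu : Fin r → ℕ) : ℕ :=
  Set.ncard {T : ℕ → ℕ → ℕ | IsSSYT lam T ∧ (∀ i j, j < lam i → T i j ≤ r) ∧
    ∀ v : Fin r, content lam T ((v : ℕ) + 1) = mu v}

/-- The Schur polynomial `s_lam(x_1, …, x_r)`, where `w = |lam|` is the weight of `lam`:
the generating function of SSYT of shape `lam` with entries in `{1, …, r}` by content. -/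
noncomputable def schur (r : ℕ) (lam : ℕ → ℕ) (w : ℕ) : MvPolynomial (Fin r) ℤ :=
  ∑ mu ∈ Fintype.piFinset (fun _ : Fin r => Finset.range (w + 1)),
    (kostkaC lam r mu : ℤ) • ∏ i, MvPolynomial.X i ^ mu i

/-- `κ_lam = 2 Σ_{i ≥ 1} Σ_{j=1}^{lam_i} (j - i)`, computed for a partition of length `≤ r`
(rows are 0-indexed, so row `i` of the function is row `i+1` of the partition). -/
def kappa (r : ℕ) (lam : ℕ → ℕ) : ℤ :=
  2 * ∑ i ∈ Finset.range r, ∑ j ∈ Finset.Icc 1 (lam i), ((j : ℤ) - ((i : ℤ) + 1))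


section Aux

lemma lam_anti {lam : ℕ → ℕ} (hdec : ∀ i, lam (i + 1) ≤ lam i) :
    ∀ {i k : ℕ}, i ≤ k → lam k ≤ lam i := by
  intro i k hik
  induction k with
  | zero => have : i = 0 := by omega
            subst this; exact le_refl _
  | succ k ih =>
    rcases Nat.eq_or_lt_of_le hik with h' | h'
    · subst h'; exact le_refl _
    · exact le_trans (hdec k) (ih (by omega))

lemma ssyt_row_mono {lam : ℕ → ℕ} {T : ℕ → ℕ → ℕ} (h : IsSSYT lam T) :
    ∀ {i j k : ℕ}, j ≤ k → k < lam i → T i j ≤ T i k := by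
  intro i j k
  induction k with
  | zero => intro hjk _
            have : j = 0 := by omega
            subst this; exact le_refl _
  | succ k ih =>
    intro hjk hk
    rcases Nat.eq_or_lt_of_le hjk with h' | h'
    · subst h'; exact le_refl _
    · exact le_trans (ih (by omega) (by omega)) (h.2.1 i k hk)

lemma ssyt_below {lam : ℕ → ℕ} {T : ℕ → ℕ → ℕ} (h : IsSSYT lam T)
    (hdec : ∀ i, lam (i + 1) ≤ lam i) :
    ∀ (d i j : ℕ), j < lam (i + d) → T i j + d ≤ T (i + d) j := by
  intro d
  induction d with
  | zero => intro i j _; simp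
  | succ d ih =>
    intro i j hj
    have hj' : j < lam ((i + d) + 1) := by rw [show (i+d)+1 = i+(d+1) by omega]; exact hj
    have h1 : j < lam (i + d) := lt_of_lt_of_le hj' (hdec (i+d))
    have h2 := ih i j h1
    have h3 := h.2.2.1 (i+d) j hj'
    have : i + (d+1) = (i+d)+1 := by omega
    rw [this]
    omega

lemma ssyt_ge {lam : ℕ → ℕ} {T : ℕ → ℕ → ℕ} (h : IsSSYT lam T)
    (hdec : ∀ i, lam (i + 1) ≤ lam i) {i j : ℕ} (hj : j < lam i) :
    i + 1 ≤ T i j := by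
  have h0 : j < lam 0 := lt_of_lt_of_le hj (lam_anti hdec (Nat.zero_le i))
  have h1 := ssyt_below h hdec i 0 j (by simpa using hj)
  have h2 := h.1 0 j h0
  simp only [Nat.zero_add] at h1
  omega

end Aux
section Counting

open Classical in
lemma content_eq_sum (lam : ℕ → ℕ) (T : ℕ → ℕ → ℕ) (v R : ℕ)
    (h0 : ∀ i, R ≤ i → lam i = 0) :
    content lam T v
      = ∑ i ∈ Finset.range R, ((Finset.range (lam i)).filter fun j => T i j = v).card := by
  classical
  have hset : {p : ℕ × ℕ | p.2 < lam p.1 ∧ T p.1 p.2 = v}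
      = ↑((Finset.range R).biUnion fun i =>
          ((Finset.range (lam i)).filter fun j => T i j = v).image fun j => (i, j)) := by
    ext ⟨i, j⟩
    simp only [Set.mem_setOf_eq, Finset.coe_biUnion, Finset.mem_coe, Finset.mem_range,
      Set.mem_iUnion, Finset.mem_image, Finset.mem_filter]
    constructor
    · rintro ⟨hj, hv⟩
      refine ⟨i, ?_, j, ⟨⟨by simpa using hj, hv⟩, rfl⟩⟩
      by_contra hiR
      have := h0 i (le_of_not_gt hiR); omega
    · rintro ⟨i', hi', j', ⟨⟨hj', hv'⟩, he⟩⟩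
      have h1 : i' = i := congrArg Prod.fst he
      have h2 : j' = j := congrArg Prod.snd he
      subst h1; subst h2
      exact ⟨by simpa using hj', hv'⟩
  rw [content, hset, Set.ncard_coe_finset]
  rw [Finset.card_biUnion]
  · refine Finset.sum_congr rfl fun i _ => ?_
    rw [Finset.card_image_of_injective _ (fun a b hab => congrArg Prod.snd hab)]
  · intro x _ y _ hxy
    simp only [Finset.disjoint_left, Finset.mem_image]
    rintro p ⟨a, _, rfl⟩ ⟨b, _, hb⟩
    exact hxy (congrArg Prod.fst hb).symm

lemma content_eq_zero (lam : ℕ → ℕ) (T : ℕ → ℕ → ℕ) (v : ℕ)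
    (h : ∀ i j, j < lam i → T i j ≠ v) : content lam T v = 0 := by
  have hset : {p : ℕ × ℕ | p.2 < lam p.1 ∧ T p.1 p.2 = v} = ∅ := by
    ext ⟨i, j⟩
    simp only [Set.mem_setOf_eq, Set.mem_empty_iff_false, iff_false, not_and]
    exact fun hj => h i j hj
  rw [content, hset, Set.ncard_empty]

lemma sum_content (lam : ℕ → ℕ) (T : ℕ → ℕ → ℕ) (M R : ℕ)
    (h0 : ∀ i, R ≤ i → lam i = 0)
    (hpos : ∀ i j, j < lam i → 1 ≤ T i j) (hub : ∀ i j, j < lam i → T i j ≤ M) :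
    ∑ v ∈ Finset.Icc 1 M, content lam T v = ∑ i ∈ Finset.range R, lam i := by
  classical
  have h1 : ∀ v ∈ Finset.Icc 1 M, content lam T v
      = ∑ i ∈ Finset.range R, ((Finset.range (lam i)).filter fun j => T i j = v).card :=
    fun v _ => content_eq_sum lam T v R h0
  rw [Finset.sum_congr rfl h1, Finset.sum_comm]
  refine Finset.sum_congr rfl fun i _ => ?_
  have h2 := Finset.card_eq_sum_card_fiberwise (s := Finset.range (lam i))
    (t := Finset.Icc 1 M) (f := fun j => T i j) (fun j hj => by
      simp only [Finset.mem_coe, Finset.mem_range] at hj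
      simp only [Finset.mem_coe, Finset.mem_Icc]
      exact ⟨hpos i j hj, hub i j hj⟩)
  rw [Finset.card_range] at h2
  exact h2.symm
end Counting
noncomputable def NN (r n c : ℕ) (mu : ℕ → ℕ) (S : ℕ → ℕ → ℕ) (v : ℕ) : ℕ :=
  ∑ w ∈ Finset.Icc v (r + 1), (c - n + content mu S (w - 1))

section NNLemmas

variable {r n c : ℕ} {mu : ℕ → ℕ} {S : ℕ → ℕ → ℕ}

lemma NN_top : NN r n c mu S (r + 2) = 0 := by
  rw [NN, Finset.Icc_eq_empty (by omega), Finset.sum_empty]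

lemma NN_succ {v : ℕ} (hv : v ≤ r + 1) :
    NN r n c mu S v = (c - n + content mu S (v - 1)) + NN r n c mu S (v + 1) := by
  rw [NN, Finset.Icc_eq_cons_Ioc hv, Finset.sum_cons, ← Finset.Icc_add_one_left_eq_Ioc]
  rfl

lemma NN_mono {v w : ℕ} (hvw : v ≤ w) : NN r n c mu S w ≤ NN r n c mu S v :=
  Finset.sum_le_sum_of_subset (Finset.Icc_subset_Icc_left hvw)

lemma content_zero_val (hS1 : IsSSYT mu S) : content mu S 0 = 0 :=
  content_eq_zero mu S 0 (fun i j hj => by have := hS1.1 i j hj; omega)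

lemma msum_eq (hmu0 : ∀ i, r ≤ i → mu i = 0) (hS1 : IsSSYT mu S)
    (hS2 : ∀ i j, j < mu i → S i j ≤ r) :
    ∑ u ∈ Finset.Icc 1 r, content mu S u = ∑ i ∈ Finset.range r, mu i :=
  sum_content mu S r r hmu0 hS1.1 hS2

lemma musum_le (hnc : n ≤ c)
    (hmusum : (∑ i ∈ Finset.range r, mu i) + r * c = n * (r + 1)) :
    ∑ i ∈ Finset.range r, mu i ≤ n := by
  have h1 : n * (r + 1) = n + n * r := by ring
  have h2 : n * r ≤ c * r := Nat.mul_le_mul_right r hnc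
  have h3 : c * r = r * c := Nat.mul_comm c r
  omega

lemma m_le_n (hnc : n ≤ c) (hmu0 : ∀ i, r ≤ i → mu i = 0) (hS1 : IsSSYT mu S)
    (hS2 : ∀ i j, j < mu i → S i j ≤ r)
    (hmusum : (∑ i ∈ Finset.range r, mu i) + r * c = n * (r + 1)) (u : ℕ) :
    content mu S u ≤ n := by
  rcases Nat.eq_zero_or_pos u with h | h
  · subst h; rw [content_zero_val hS1]; omega
  rcases le_or_gt u r with h' | h'
  · calc content mu S u ≤ ∑ w ∈ Finset.Icc 1 r, content mu S w :=
          Finset.single_le_sum (fun _ _ => Nat.zero_le _) (Finset.mem_Icc.2 ⟨h, h'⟩)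
      _ = ∑ i ∈ Finset.range r, mu i := msum_eq hmu0 hS1 hS2
      _ ≤ n := musum_le hnc hmusum
  · rw [content_eq_zero mu S u (fun i j hj hv => by have := hS2 i j hj; omega)]
    omega

lemma NN_one (hnc : n ≤ c) (hmu0 : ∀ i, r ≤ i → mu i = 0) (hS1 : IsSSYT mu S)
    (hS2 : ∀ i j, j < mu i → S i j ≤ r)
    (hmusum : (∑ i ∈ Finset.range r, mu i) + r * c = n * (r + 1)) :
    NN r n c mu S 1 = c := by
  have h1 : NN r n c mu S 1
      = (r + 1) * (c - n) + ∑ w ∈ Finset.Icc 1 (r + 1), content mu S (w - 1) := by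
    rw [NN, Finset.sum_add_distrib, Finset.sum_const, Nat.card_Icc]
    simp only [smul_eq_mul]
    congr 2
  have h2 : Finset.Icc 1 (r + 1) = (Finset.range (r + 1)).image (· + 1) := by
    ext u
    simp only [Finset.mem_Icc, Finset.mem_image, Finset.mem_range]
    constructor
    · intro hu; exact ⟨u - 1, by omega, by omega⟩
    · rintro ⟨w, hw, rfl⟩; omega
  have h3 : ∑ w ∈ Finset.Icc 1 (r + 1), content mu S (w - 1)
      = ∑ u ∈ Finset.range (r + 1), content mu S u := by
    rw [h2, Finset.sum_image (by intro a _ b _ h; simp only at h; omega)]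
    exact Finset.sum_congr rfl (fun u _ => by simp)
  have h4 : Finset.range (r + 1) = insert 0 (Finset.Icc 1 r) := by
    ext u
    simp only [Finset.mem_range, Finset.mem_insert, Finset.mem_Icc]
    omega
  have h5 : ∑ u ∈ Finset.range (r + 1), content mu S u = ∑ i ∈ Finset.range r, mu i := by
    rw [h4, Finset.sum_insert (by simp), content_zero_val hS1, msum_eq hmu0 hS1 hS2]
    omega
  rw [h1, h3, h5]
  zify [hnc]
  -- (cast cleanup)
  have hz : ((∑ i ∈ Finset.range r, mu i : ℕ) : ℤ) + r * c = n * (r + 1) := by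
    exact_mod_cast congrArg (Nat.cast : ℕ → ℤ) hmusum
  push_cast at hz
  linear_combination hz

lemma NN_le_c (hnc : n ≤ c) (hmu0 : ∀ i, r ≤ i → mu i = 0) (hS1 : IsSSYT mu S)
    (hS2 : ∀ i j, j < mu i → S i j ≤ r)
    (hmusum : (∑ i ∈ Finset.range r, mu i) + r * c = n * (r + 1)) {v : ℕ} (hv : 1 ≤ v) :
    NN r n c mu S v ≤ c := by
  calc NN r n c mu S v ≤ NN r n c mu S 1 := NN_mono hv
    _ = c := NN_one hnc hmu0 hS1 hS2 hmusum

lemma NN_two (hr : 1 ≤ r) (hnc : n ≤ c) (hmu0 : ∀ i, r ≤ i → mu i = 0) (hS1 : IsSSYT mu S)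
    (hS2 : ∀ i j, j < mu i → S i j ≤ r)
    (hmusum : (∑ i ∈ Finset.range r, mu i) + r * c = n * (r + 1)) :
    NN r n c mu S 2 = n := by
  have h1 := NN_succ (r := r) (n := n) (c := c) (mu := mu) (S := S) (v := 1) (by omega)
  rw [NN_one hnc hmu0 hS1 hS2 hmusum, content_zero_val hS1] at h1
  norm_num at h1
  have h2 : NN r n c mu S 2 ≤ c := NN_le_c hnc hmu0 hS1 hS2 hmusum (by omega)
  omega

end NNLemmas
section ContentFormula

lemma content_formula (r c : ℕ) (lam mu : ℕ → ℕ) (T S : ℕ → ℕ → ℕ) (M : ℕ → ℕ)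
    (hlen : ∀ i, r ≤ i → lam i = 0)
    (hc : ∀ i, i < r → c ≤ lam i)
    (hmu : ∀ i, mu i = lam i - c)
    (hMc : ∀ i, i < r → M i ≤ c)
    (hleft : ∀ i j, i < r → j < c → T i j = if j < M i then i + 1 else i + 2)
    (hright : ∀ i j, i < r → j < mu i → T i (j + c) = S i j + 1)
    (v : ℕ) (hv : 1 ≤ v) (hvr : v ≤ r + 1) :
    content lam T v = ((if v ≤ r then M (v - 1) else 0)
      + (c - (if 2 ≤ v then M (v - 2) else c))) + content mu S (v - 1) := by
  classical
  have hmu0 : ∀ i, r ≤ i → mu i = 0 := fun i hi => by rw [hmu i, hlen i hi]; omega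
  rw [content_eq_sum lam T v r hlen, content_eq_sum mu S (v - 1) r hmu0]
  have hrow : ∀ i ∈ Finset.range r,
      ((Finset.range (lam i)).filter fun j => T i j = v).card
        = ((if i + 1 = v then M i else 0) + (if i + 2 = v then c - M i else 0))
          + ((Finset.range (mu i)).filter fun j => S i j = v - 1).card := by
    intro i hi
    rw [Finset.mem_range] at hi
    have hsplit : Finset.range (lam i) = Finset.range c ∪ Finset.Ico c (lam i) := by
      rw [Finset.range_eq_Ico, Finset.range_eq_Ico, Finset.Ico_union_Ico_eq_Ico (Nat.zero_le c) (hc i hi)]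
    rw [hsplit, Finset.filter_union, Finset.card_union_of_disjoint (by
      apply Finset.disjoint_filter_filter
      simp only [Finset.disjoint_left, Finset.mem_range, Finset.mem_Ico]
      intro a ha; omega)]
    congr 1
    · -- left part
      rcases eq_or_ne (i + 1) v with h1 | h1
      · rw [if_pos h1, if_neg (by omega)]
        have : (Finset.range c).filter (fun j => T i j = v) = Finset.range (M i) := by
          ext j
          simp only [Finset.mem_filter, Finset.mem_range]
          constructor
          · rintro ⟨hj, hT⟩
            rw [hleft i j hi hj] at hT
            by_contra hjM
            rw [if_neg hjM] at hT
            omega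
          · intro hj
            have hjc : j < c := lt_of_lt_of_le hj (hMc i hi)
            refine ⟨hjc, ?_⟩
            rw [hleft i j hi hjc, if_pos hj]; omega
        rw [this, Finset.card_range]; omega
      rcases eq_or_ne (i + 2) v with h2 | h2
      · rw [if_neg h1, if_pos h2]
        have : (Finset.range c).filter (fun j => T i j = v) = Finset.Ico (M i) c := by
          ext j
          simp only [Finset.mem_filter, Finset.mem_range, Finset.mem_Ico]
          constructor
          · rintro ⟨hj, hT⟩
            rw [hleft i j hi hj] at hT
            by_contra hjM
            rw [if_pos (by omega)] at hT
            omega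
          · rintro ⟨hjM, hjc⟩
            refine ⟨hjc, ?_⟩
            rw [hleft i j hi hjc, if_neg (by omega)]; omega
        rw [this, Nat.card_Ico]; omega
      · rw [if_neg h1, if_neg h2]
        have : (Finset.range c).filter (fun j => T i j = v) = ∅ := by
          ext j
          simp only [Finset.mem_filter, Finset.mem_range, Finset.notMem_empty, iff_false,
            not_and]
          intro hj hT
          rw [hleft i j hi hj] at hT
          split at hT <;> omega
        rw [this, Finset.card_empty]
    · -- right part
      have himg : Finset.Ico c (lam i) = (Finset.range (mu i)).image (· + c) := by
        ext k
        simp only [Finset.mem_Ico, Finset.mem_image, Finset.mem_range]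
        have := hmu i
        constructor
        · rintro ⟨h1, h2⟩; exact ⟨k - c, by omega, by omega⟩
        · rintro ⟨j, hj, rfl⟩; omega
      rw [himg, Finset.filter_image,
        Finset.card_image_of_injective _ (fun a b hab => by omega)]
      congr 1
      apply Finset.filter_congr
      intro j hj
      rw [Finset.mem_range] at hj
      rw [hright i j hi hj]
      constructor <;> (intro h; omega)
  rw [Finset.sum_congr rfl hrow, Finset.sum_add_distrib, Finset.sum_add_distrib]
  congr 1
  -- left sums
  have e1 : ∀ i, (if i + 1 = v then M i else 0) = (if i = v - 1 then M i else 0) :=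
    fun i => if_congr (by omega) rfl rfl
  have s1 : ∑ i ∈ Finset.range r, (if i + 1 = v then M i else 0)
      = if v ≤ r then M (v - 1) else 0 := by
    rw [Finset.sum_congr rfl (fun i _ => e1 i), Finset.sum_ite_eq' (Finset.range r) (v - 1) M]
    exact if_congr (by rw [Finset.mem_range]; omega) rfl rfl
  rcases le_or_gt 2 v with h2 | h2
  · have e2 : ∀ i, (if i + 2 = v then c - M i else 0)
        = (if i = v - 2 then c - M i else 0) := fun i => if_congr (by omega) rfl rfl
    have s2 : ∑ i ∈ Finset.range r, (if i + 2 = v then c - M i else 0) = c - M (v - 2) := by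
      rw [Finset.sum_congr rfl (fun i _ => e2 i),
        Finset.sum_ite_eq' (Finset.range r) (v - 2) (fun i => c - M i)]
      rw [if_pos (by rw [Finset.mem_range]; omega)]
    rw [s1, s2, if_pos h2]
  · have s2 : ∑ i ∈ Finset.range r, (if i + 2 = v then c - M i else 0) = 0 := by
      apply Finset.sum_eq_zero
      intro i _
      rw [if_neg (by omega)]
    rw [s1, s2, if_neg (show ¬ 2 ≤ v by omega)]
    simp

end ContentFormula
noncomputable def Phi (r n : ℕ) (lam : ℕ → ℕ) (S : ℕ → ℕ → ℕ) : ℕ → ℕ → ℕ :=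
  fun i j =>
    if j < lam i then
      (if j < lam (r - 1) then
        (if j < NN r n (lam (r - 1)) (fun k => lam k - lam (r - 1)) S (i + 2)
          then i + 1 else i + 2)
      else S i (j - lam (r - 1)) + 1)
    else 0

section Main

variable {r n : ℕ} {lam : ℕ → ℕ}

lemma lam_ge_c (hdec : ∀ i, lam (i + 1) ≤ lam i) {i : ℕ} (hi : i < r) :
    lam (r - 1) ≤ lam i :=
  lam_anti hdec (by omega)

lemma musum (hdec : ∀ i, lam (i + 1) ≤ lam i)
    (hwt : ∑ i ∈ Finset.range r, lam i = n * (r + 1)) :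
    (∑ i ∈ Finset.range r, (lam i - lam (r - 1))) + r * lam (r - 1) = n * (r + 1) := by
  have h1 : ∀ i ∈ Finset.range r, (lam i - lam (r - 1)) + lam (r - 1) = lam i := by
    intro i hi
    rw [Finset.mem_range] at hi
    exact Nat.sub_add_cancel (lam_ge_c hdec hi)
  calc (∑ i ∈ Finset.range r, (lam i - lam (r - 1))) + r * lam (r - 1)
      = ∑ i ∈ Finset.range r, ((lam i - lam (r - 1)) + lam (r - 1)) := by
        rw [Finset.sum_add_distrib, Finset.sum_const, Finset.card_range, smul_eq_mul]
    _ = ∑ i ∈ Finset.range r, lam i := Finset.sum_congr rfl h1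
    _ = n * (r + 1) := hwt

lemma phi_spec (hr : 1 ≤ r)
    (hdec : ∀ i, lam (i + 1) ≤ lam i)
    (hlen : ∀ i, r ≤ i → lam i = 0)
    (hwt : ∑ i ∈ Finset.range r, lam i = n * (r + 1))
    (hlast : n ≤ lam (r - 1))
    (S : ℕ → ℕ → ℕ) (hS1 : IsSSYT (fun k => lam k - lam (r - 1)) S)
    (hS2 : ∀ i j, j < lam i - lam (r - 1) → S i j ≤ r) :
    IsSSYT lam (Phi r n lam S) ∧ (∀ i j, j < lam i → Phi r n lam S i j ≤ r + 1) ∧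
      (∀ v, 1 ≤ v → v ≤ r + 1 → content lam (Phi r n lam S) v = n) := by
  classical
  set c := lam (r - 1) with hcdef
  set mu : ℕ → ℕ := fun k => lam k - c with hmudef
  set N : ℕ → ℕ := NN r n c mu S with hNdef
  have hc : ∀ i, i < r → c ≤ lam i := fun i hi => lam_ge_c hdec hi
  have hmusum : (∑ i ∈ Finset.range r, mu i) + r * c = n * (r + 1) := musum hdec hwt
  have hmu0 : ∀ i, r ≤ i → mu i = 0 := fun i hi => by
    simp only [hmudef]; rw [hlen i hi]; omega
  have hmudec : ∀ i, mu (i + 1) ≤ mu i := fun i => Nat.sub_le_sub_right (hdec i) c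
  have hNsucc : ∀ v, v ≤ r + 1 → N v = (c - n + content mu S (v - 1)) + N (v + 1) :=
    fun v hv => NN_succ hv
  have hNtop : N (r + 2) = 0 := NN_top
  have hNmono : ∀ {v w}, v ≤ w → N w ≤ N v := fun h => NN_mono h
  have hNle : ∀ v, 1 ≤ v → N v ≤ c := fun v hv => NN_le_c hlast hmu0 hS1 hS2 hmusum hv
  have hN2 : N 2 = n := NN_two hr hlast hmu0 hS1 hS2 hmusum
  have hm0 : content mu S 0 = 0 := content_zero_val hS1
  have hmle : ∀ u, content mu S u ≤ n := m_le_n hlast hmu0 hS1 hS2 hmusum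
  have hrowlt : ∀ {i j}, j < lam i → i < r := by
    intro i j hj
    by_contra hir
    rw [hlen i (by omega)] at hj; omega
  have hPleft : ∀ i j, i < r → j < c →
      Phi r n lam S i j = if j < N (i + 2) then i + 1 else i + 2 := by
    intro i j hi hj
    rw [Phi]
    rw [if_pos (lt_of_lt_of_le hj (hc i hi)), if_pos hj]
  have hPright : ∀ i j, i < r → j < mu i → Phi r n lam S i (j + c) = S i j + 1 := by
    intro i j hi hj
    have h1 : j + c < lam i := by
      have := hc i hi; simp only [hmudef] at hj; omega
    rw [Phi, if_pos h1, if_neg (by omega), Nat.add_sub_cancel]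
  have hSge : ∀ {i j}, j < mu i → i + 1 ≤ S i j := fun {i j} hj => ssyt_ge hS1 hmudec hj
  have hmulam : ∀ {i j}, i < r → (j + c < lam i ↔ j < mu i) := by
    intro i j hi
    have := hc i hi
    simp only [hmudef]; omega
  refine ⟨⟨?_, ?_, ?_, ?_⟩, ?_, ?_⟩
  · -- positivity
    intro i j hj
    have hi := hrowlt hj
    rcases lt_or_ge j c with h | h
    · rw [hPleft i j hi h]; split_ifs <;> omega
    · have hj' : j - c < mu i := by have := hc i hi; simp only [hmudef]; omega
      have := hPright i (j - c) hi hj'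
      rw [show j - c + c = j by omega] at this
      rw [this]; omega
  · -- rows
    intro i j hj1
    have hi := hrowlt (show j < lam i by omega)
    rcases lt_or_ge (j + 1) c with h | h
    · rw [hPleft i j hi (by omega), hPleft i (j + 1) hi h]
      have hmono : N (i + 2) ≤ N (i + 2) := le_refl _
      split_ifs <;> omega
    rcases lt_or_ge j c with h2 | h2
    · -- j + 1 = c
      have hjc : j + 1 = c := by omega
      have hmui : 0 < mu i := by
        have := hc i hi; simp only [hmudef]; omega
      have h3 := hPright i 0 hi hmui
      rw [show (0 : ℕ) + c = j + 1 by omega] at h3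
      rw [hPleft i j hi h2, h3]
      have := hSge hmui
      split_ifs <;> omega
    · -- both right
      have hj' : j - c < mu i := by have := hc i hi; simp only [hmudef]; omega
      have hj1' : (j - c) + 1 < mu i := by have := hc i hi; simp only [hmudef]; omega
      have e1 := hPright i (j - c) hi (by omega)
      have e2 := hPright i ((j - c) + 1) hi hj1'
      rw [show j - c + c = j by omega] at e1
      rw [show (j - c) + 1 + c = j + 1 by omega] at e2
      rw [e1, e2]
      have := hS1.2.1 i (j - c) (by simpa using hj1')
      omega
  · -- columns
    intro i j hj
    have hi1 : i + 1 < r := hrowlt hj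
    have hi : i < r := by omega
    have hjlam : j < lam i := lt_of_lt_of_le hj (hdec i)
    rcases lt_or_ge j c with h | h
    · rw [hPleft i j hi h, hPleft (i + 1) j hi1 h]
      have hmono : N (i + 1 + 2) ≤ N (i + 2) := hNmono (by omega)
      split_ifs <;> omega
    · have hj' : j - c < mu (i + 1) := by have := hc (i+1) hi1; simp only [hmudef]; omega
      have e1 := hPright i (j - c) hi (lt_of_lt_of_le hj' (hmudec i))
      have e2 := hPright (i + 1) (j - c) hi1 hj'
      rw [show j - c + c = j by omega] at e1 e2
      rw [e1, e2]
      have := hS1.2.2.1 i (j - c) (by simpa using hj')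
      omega
  · -- junk
    intro i j hj
    rw [Phi, if_neg (by omega)]
  · -- bound
    intro i j hj
    have hi := hrowlt hj
    rcases lt_or_ge j c with h | h
    · rw [hPleft i j hi h]; split_ifs <;> omega
    · have hj' : j - c < mu i := by have := hc i hi; simp only [hmudef]; omega
      have e1 := hPright i (j - c) hi hj'
      rw [show j - c + c = j by omega] at e1
      rw [e1]
      have := hS2 i (j - c) (by simpa using hj')
      omega
  · -- content
    intro v hv hvr
    have hform := content_formula r c lam mu (Phi r n lam S) S (fun i => N (i + 2))
      hlen hc (fun i => rfl) (fun i _ => hNle (i + 2) (by omega)) hPleft hPright v hv hvr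
    rw [hform]
    beta_reduce
    rcases eq_or_lt_of_le hv with h1 | h1
    · -- v = 1
      rw [← h1]
      rw [if_pos hr, if_neg (by omega)]
      norm_num
      rw [hN2, hm0]
      omega
    rcases eq_or_lt_of_le hvr with h2 | h2
    · -- v = r + 1
      rw [h2]
      rw [if_neg (by omega), if_pos (by omega)]
      rw [show r + 1 - 2 + 2 = r + 1 by omega, show r + 1 - 1 = r by omega]
      have e1 := hNsucc (r + 1) (by omega)
      rw [hNtop] at e1
      rw [show r + 1 - 1 = r by omega] at e1
      have e2 := hNle (r + 1) (by omega)
      have e3 := hmle r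
      omega
    · -- 2 ≤ v ≤ r
      have hv2 : 2 ≤ v := by omega
      have hvle : v ≤ r := by omega
      rw [if_pos hvle, if_pos hv2]
      rw [show v - 1 + 2 = v + 1 by omega, show v - 2 + 2 = v by omega]
      have e1 := hNsucc v (by omega)
      have e2 := hNle v (by omega)
      have e3 := hmle (v - 1)
      omega

end Main
section Main2

variable {r n : ℕ} {lam : ℕ → ℕ}

lemma Phi_right_std (hdec : ∀ i, lam (i + 1) ≤ lam i) (S : ℕ → ℕ → ℕ) {i j : ℕ}
    (hi : i < r) (hj : j < lam i - lam (r - 1)) :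
    Phi r n lam S i (j + lam (r - 1)) = S i j + 1 := by
  have h1 : lam (r - 1) ≤ lam i := lam_ge_c hdec hi
  rw [Phi, if_pos (by omega), if_neg (by omega), Nat.add_sub_cancel]

lemma phi_injOn (hdec : ∀ i, lam (i + 1) ≤ lam i) (hlen : ∀ i, r ≤ i → lam i = 0) :
    Set.InjOn (Phi r n lam)
      {S : ℕ → ℕ → ℕ | IsSSYT (fun k => lam k - lam (r - 1)) S ∧
        ∀ i j, j < lam i - lam (r - 1) → S i j ≤ r} := by
  intro S hS S' hS' heq
  funext i j
  by_cases hj : j < lam i - lam (r - 1)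
  · have hi : i < r := by
      by_contra hir
      rw [hlen i (by omega)] at hj; omega
    have e1 := Phi_right_std (n := n) hdec S hi hj
    have e2 := Phi_right_std (n := n) hdec S' hi hj
    have := congrFun (congrFun heq i) (j + lam (r - 1))
    rw [e1, e2] at this
    omega
  · rw [hS.1.2.2.2 i j (by beta_reduce; omega), hS'.1.2.2.2 i j (by beta_reduce; omega)]

lemma phi_surj (hr : 1 ≤ r)
    (hdec : ∀ i, lam (i + 1) ≤ lam i)
    (hlen : ∀ i, r ≤ i → lam i = 0)
    (hwt : ∑ i ∈ Finset.range r, lam i = n * (r + 1))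
    (hlast : n ≤ lam (r - 1))
    (T : ℕ → ℕ → ℕ) (hT1 : IsSSYT lam T)
    (hT2 : ∀ i j, j < lam i → T i j ≤ r + 1)
    (hT3 : ∀ v, 1 ≤ v → v ≤ r + 1 → content lam T v = n) :
    ∃ S, (IsSSYT (fun k => lam k - lam (r - 1)) S ∧
        (∀ i j, j < lam i - lam (r - 1) → S i j ≤ r)) ∧ Phi r n lam S = T := by
  classical
  set c := lam (r - 1) with hcdef
  set mu : ℕ → ℕ := fun k => lam k - c with hmudef
  have hc : ∀ i, i < r → c ≤ lam i := fun i hi => lam_ge_c hdec hi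
  have hmusum : (∑ i ∈ Finset.range r, mu i) + r * c = n * (r + 1) := musum hdec hwt
  have hmu0 : ∀ i, r ≤ i → mu i = 0 := fun i hi => by
    simp only [hmudef]; rw [hlen i hi]; omega
  have hrowlt : ∀ {i j}, j < lam i → i < r := by
    intro i j hj
    by_contra hir
    rw [hlen i (by omega)] at hj; omega
  have hge : ∀ {i j}, j < lam i → i + 1 ≤ T i j := fun {i j} hj => ssyt_ge hT1 hdec hj
  have hcr : c = lam (r - 1) := rfl
  have hle2 : ∀ i j, i < r → j < c → T i j ≤ i + 2 := by
    intro i j hi hj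
    have e : i + (r - 1 - i) = r - 1 := by omega
    have hjr : j < lam (i + (r - 1 - i)) := by rw [e, ← hcr]; exact hj
    have hblw := ssyt_below hT1 hdec (r - 1 - i) i j hjr
    rw [e] at hblw
    have hub := hT2 (r - 1) j (by rw [← hcr]; exact hj)
    omega
  have hno1 : ∀ i j, c ≤ j → j < lam i → 2 ≤ T i j := by
    intro i j hcj hj
    by_contra hT
    have h1 : T i j = 1 := by have := hge hj; omega
    have hi0 : i = 0 := by have := hge hj; omega
    subst hi0
    have hcont := hT3 1 (le_refl _) (by omega)
    rw [content_eq_sum lam T 1 r hlen] at hcont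
    have hrow0 : Finset.range (j + 1) ⊆ (Finset.range (lam 0)).filter fun k => T 0 k = 1 := by
      intro k hk
      rw [Finset.mem_range] at hk
      rw [Finset.mem_filter, Finset.mem_range]
      have hk0 : k < lam 0 := by omega
      have h2 := ssyt_row_mono hT1 (show k ≤ j by omega) hj
      have h3 := hge hk0
      exact ⟨hk0, by omega⟩
    have h4 : j + 1 ≤ ((Finset.range (lam 0)).filter fun k => T 0 k = 1).card := by
      calc j + 1 = (Finset.range (j + 1)).card := (Finset.card_range _).symm
        _ ≤ _ := Finset.card_le_card hrow0
    have h5 : ((Finset.range (lam 0)).filter fun k => T 0 k = 1).card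
        ≤ ∑ i ∈ Finset.range r, ((Finset.range (lam i)).filter fun k => T i k = 1).card := by
      apply Finset.single_le_sum
        (f := fun i => ((Finset.range (lam i)).filter fun k => T i k = 1).card)
        (fun i _ => Nat.zero_le _) (Finset.mem_range.2 (by omega))
    omega
  -- define S
  set S : ℕ → ℕ → ℕ := fun i j => if j < mu i then T i (j + c) - 1 else 0 with hSdef
  have hmulam : ∀ {i j : ℕ}, i < r → (j + c < lam i ↔ j < mu i) := by
    intro i j hi
    have := hc i hi
    simp only [hmudef]; omega
  have hSright : ∀ i j, j < mu i → T i (j + c) = S i j + 1 := by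
    intro i j hj
    have hi : i < r := by
      by_contra hir
      rw [hmu0 i (by omega)] at hj; omega
    have hjl : j + c < lam i := (hmulam hi).2 hj
    have h2 := hno1 i (j + c) (by omega) hjl
    simp only [hSdef, if_pos hj]
    omega
  have hS1 : IsSSYT mu S := by
    refine ⟨?_, ?_, ?_, ?_⟩
    · intro i j hj
      have hi : i < r := by
        by_contra hir
        rw [hmu0 i (by omega)] at hj; omega
      have := hno1 i (j + c) (by omega) ((hmulam hi).2 hj)
      simp only [hSdef, if_pos hj]
      omega
    · intro i j hj
      have hi : i < r := by
        by_contra hir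
        rw [hmu0 i (by omega)] at hj; omega
      have e1 := hSright i j (by omega)
      have e2 := hSright i (j + 1) hj
      have h3 := hT1.2.1 i (j + c) (by
        have := (hmulam (j := j + 1) hi).2 hj; omega)
      rw [show j + c + 1 = j + 1 + c by omega] at h3
      omega
    · intro i j hj
      have hi1 : i + 1 < r := by
        by_contra hir
        rw [hmu0 (i + 1) (by omega)] at hj; omega
      have e1 := hSright i j (lt_of_lt_of_le hj (Nat.sub_le_sub_right (hdec i) c))
      have e2 := hSright (i + 1) j hj
      have h3 := hT1.2.2.1 i (j + c) ((hmulam hi1).2 hj)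
      omega
    · intro i j hj
      simp only [hSdef]
      exact if_neg (by omega)
  have hS2 : ∀ i j, j < mu i → S i j ≤ r := by
    intro i j hj
    have hi : i < r := by
      by_contra hir
      rw [hmu0 i (by omega)] at hj; omega
    have := hT2 i (j + c) ((hmulam hi).2 hj)
    have := hSright i j hj
    omega
  -- N and M
  set N : ℕ → ℕ := NN r n c mu S with hNdef
  have hNsucc : ∀ v, v ≤ r + 1 → N v = (c - n + content mu S (v - 1)) + N (v + 1) :=
    fun v hv => NN_succ hv
  have hNle : ∀ v, 1 ≤ v → N v ≤ c := fun v hv => NN_le_c hlast hmu0 hS1 hS2 hmusum hv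
  have hN2 : N 2 = n := NN_two hr hlast hmu0 hS1 hS2 hmusum
  have hm0 : content mu S 0 = 0 := content_zero_val hS1
  have hmle : ∀ u, content mu S u ≤ n := m_le_n hlast hmu0 hS1 hS2 hmusum
  set M : ℕ → ℕ := fun i => ((Finset.range c).filter fun j => T i j = i + 1).card with hMdef
  have hMc : ∀ i, i < r → M i ≤ c := by
    intro i _
    simp only [hMdef]
    calc ((Finset.range c).filter fun j => T i j = i + 1).card
        ≤ (Finset.range c).card := Finset.card_filter_le _ _
      _ = c := Finset.card_range c
  have hiff : ∀ i j, i < r → j < c → (T i j = i + 1 ↔ j < M i) := by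
    intro i j hi hj
    constructor
    · intro hT
      have hsub : Finset.range (j + 1) ⊆ (Finset.range c).filter fun k => T i k = i + 1 := by
        intro k hk
        rw [Finset.mem_range] at hk
        rw [Finset.mem_filter, Finset.mem_range]
        have hkc : k < c := by omega
        have h2 := ssyt_row_mono hT1 (show k ≤ j by omega)
          (lt_of_lt_of_le hj (hc i hi))
        have h3 := hge (lt_of_lt_of_le hkc (hc i hi))
        exact ⟨hkc, by omega⟩
      have := Finset.card_le_card hsub
      rw [Finset.card_range] at this
      simp only [hMdef]
      omega
    · intro hjM
      by_contra hT
      have hT2' : T i j = i + 2 := by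
        have := hge (lt_of_lt_of_le hj (hc i hi))
        have := hle2 i j hi hj
        omega
      have hsub : ((Finset.range c).filter fun k => T i k = i + 1) ⊆ Finset.range j := by
        intro k hk
        rw [Finset.mem_filter, Finset.mem_range] at hk
        rw [Finset.mem_range]
        by_contra hkj
        have h2 := ssyt_row_mono hT1 (show j ≤ k by omega)
          (lt_of_lt_of_le hk.1 (hc i hi))
        omega
      have := Finset.card_le_card hsub
      rw [Finset.card_range] at this
      simp only [hMdef] at hjM
      omega
  have hleft : ∀ i j, i < r → j < c → T i j = if j < M i then i + 1 else i + 2 := by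
    intro i j hi hj
    split_ifs with h
    · exact (hiff i j hi hj).2 h
    · have h1 : ¬ T i j = i + 1 := fun hT => h ((hiff i j hi hj).1 hT)
      have := hge (lt_of_lt_of_le hj (hc i hi))
      have := hle2 i j hi hj
      omega
  have hform : ∀ v, 1 ≤ v → v ≤ r + 1 →
      n = ((if v ≤ r then M (v - 1) else 0) + (c - (if 2 ≤ v then M (v - 2) else c)))
        + content mu S (v - 1) := by
    intro v hv hvr
    rw [← hT3 v hv hvr]
    exact content_formula r c lam mu T S M hlen hc (fun i => rfl)
      hMc hleft (fun i j hi hj => hSright i j hj) v hv hvr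
  have hMN : ∀ i, i < r → M i = N (i + 2) := by
    intro i
    induction i with
    | zero =>
      intro hi
      have h1 := hform 1 (le_refl _) (by omega)
      rw [if_pos hr, if_neg (by omega), hm0] at h1
      simp only [Nat.sub_self] at h1
      rw [hN2]
      omega
    | succ i ih =>
      intro hi1
      have hMi := ih (by omega)
      have h1 := hform (i + 2) (by omega) (by omega)
      rw [if_pos (by omega : i + 2 ≤ r)] at h1
      rw [if_pos (by omega : 2 ≤ i + 2)] at h1
      rw [show i + 2 - 1 = i + 1 by omega, show i + 2 - 2 = i by omega] at h1
      have h2 := hNsucc (i + 2) (by omega)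
      rw [show i + 2 - 1 = i + 1 by omega, show i + 2 + 1 = i + 3 by omega] at h2
      have h3 := hNle (i + 2) (by omega)
      have h4 := hMc i (by omega)
      have h5 := hmle (i + 1)
      rw [show i + 1 + 2 = i + 3 by omega]
      rw [hMi] at h1 h4
      omega
  refine ⟨S, ⟨hS1, hS2⟩, ?_⟩
  funext i j
  by_cases hj : j < lam i
  · have hi : i < r := hrowlt hj
    by_cases h : j < c
    · have hPl : Phi r n lam S i j = if j < N (i + 2) then i + 1 else i + 2 := by
        rw [Phi, if_pos (lt_of_lt_of_le h (hc i hi)), if_pos h]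
      rw [hPl, hleft i j hi h, hMN i hi]
    · have hj' : j - c < mu i := by have := hc i hi; simp only [hmudef]; omega
      have e1 := Phi_right_std (n := n) hdec S hi (by simpa using hj')
      rw [show j - c + c = j by omega] at e1
      rw [e1, ← hSright i (j - c) hj']
      rw [show j - c + c = j by omega]
  · rw [Phi, if_neg hj, hT1.2.2.2 i j (by omega)]

end Main2

/-- Let `r ≥ 1`, `n ≥ 0`, and let `λ` be a partition with `|λ| = n(r+1)`,
`ℓ(λ) ≤ r` and `λ_r ≥ n`.  Let `μ = (λ_1 - λ_r, …, λ_{r-1} - λ_r)` be obtained from `λ` by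
deleting its first `λ_r` columns.  Then `K_{λ,(n)^{r+1}}` equals the number of SSYT of
shape `μ` with entries in `{1, …, r}`.  (Rows are 0-indexed: `lam i` is `λ_{i+1}`.) -/
theorem kostka_eq_ssytCount_of_deleteColumns
    (r n : ℕ) (hr : 1 ≤ r) (lam : ℕ → ℕ)
    (hdec : ∀ i, lam (i + 1) ≤ lam i)
    (hlen : ∀ i, r ≤ i → lam i = 0)
    (hwt : ∑ i ∈ Finset.range r, lam i = n * (r + 1))
    (hlast : n ≤ lam (r - 1)) :
    kostka lam n (r + 1) = ssytCount (fun i => lam i - lam (r - 1)) r := by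

  classical
  have hseteq : {T : ℕ → ℕ → ℕ | IsSSYT lam T ∧ (∀ i j, j < lam i → T i j ≤ r + 1) ∧
        ∀ v, 1 ≤ v → v ≤ r + 1 → content lam T v = n}
      = (Phi r n lam) '' {S : ℕ → ℕ → ℕ |
          IsSSYT (fun k => lam k - lam (r - 1)) S ∧
          ∀ i j, j < lam i - lam (r - 1) → S i j ≤ r} := by
    ext T
    constructor
    · rintro ⟨hT1, hT2, hT3⟩
      obtain ⟨S, hS, hPhi⟩ := phi_surj hr hdec hlen hwt hlast T hT1 hT2 hT3
      exact ⟨S, ⟨hS.1, hS.2⟩, hPhi⟩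
    · rintro ⟨S, hS, rfl⟩
      obtain ⟨h1, h2, h3⟩ := phi_spec hr hdec hlen hwt hlast S hS.1 hS.2
      exact ⟨h1, h2, h3⟩
  show Set.ncard _ = Set.ncard _
  rw [show {T : ℕ → ℕ → ℕ | IsSSYT lam T ∧ (∀ i j, j < lam i → T i j ≤ r + 1) ∧
        ∀ v, 1 ≤ v → v ≤ r + 1 → content lam T v = n}
      = (Phi r n lam) '' {S : ℕ → ℕ → ℕ |
          IsSSYT (fun k => lam k - lam (r - 1)) S ∧
          ∀ i j, j < lam i - lam (r - 1) → S i j ≤ r} from hseteq]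
  exact Set.ncard_image_of_injOn (phi_injOn hdec hlen)
end

section
/- Let r ≥ 1 and n ≥ 0 be integers, let λ be a partition with |λ| = n(r+1), ℓ(λ) ≤ r, and λ_r ≥ n, and let T be an SSYT of shape λ in which each of the values 1, …, r+1 occurs exactly n times. Then every entry of T lying in a column of index greater than λ_r is at least 2, and the filling of shape μ = (λ_1 − λ_r, …, λ_{r−1} − λ_r) obtained by restricting T to the columns of index greater than λ_r and decreasing every entry by 1 is an SSYT of shape μ with entries in {1, …, r}. -/
open Finset

/-- Let `r ≥ 1`, `n ≥ 0`, let `λ` be a partition with `|λ| = n(r+1)`,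
`ℓ(λ) ≤ r`, `λ_r ≥ n`, and let `T` be an SSYT of shape `λ` in which each of the values
`1, …, r+1` occurs exactly `n` times.  Then every entry of `T` lying in a column of index
greater than `λ_r` is at least `2`, and restricting `T` to these columns and decreasing
every entry by `1` yields an SSYT of shape `μ = (λ_1 - λ_r, …, λ_{r-1} - λ_r)` with
entries in `{1, …, r}`.  (Rows and columns are 0-indexed, so the columns of index
`> λ_r` in the 1-indexed convention are the columns `j ≥ lam (r-1)` here.) -/
theorem restrict_ssyt_of_rectangular_part
    (r n : ℕ) (hr : 1 ≤ r) (lam : ℕ → ℕ)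
    (hdec : ∀ i, lam (i + 1) ≤ lam i)
    (hlen : ∀ i, r ≤ i → lam i = 0)
    (hwt : ∑ i ∈ Finset.range r, lam i = n * (r + 1))
    (hlast : n ≤ lam (r - 1))
    (T : ℕ → ℕ → ℕ)
    (hT : IsSSYT lam T)
    (hTcont : ∀ v, 1 ≤ v → v ≤ r + 1 → content lam T v = n) :
    (∀ i j, lam (r - 1) ≤ j → j < lam i → 2 ≤ T i j) ∧
    IsSSYT (fun i => lam i - lam (r - 1))
      (fun i j => if j < lam i - lam (r - 1) then T i (j + lam (r - 1)) - 1 else 0) ∧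
    (∀ i j, j < lam i - lam (r - 1) → T i (j + lam (r - 1)) - 1 ≤ r) := by
  obtain ⟨h1, hrow, hcol, hzero⟩ := hT
  have mono : ∀ i k, i ≤ k → lam k ≤ lam i := fun i k hik =>
    antitone_nat_of_succ_le hdec hik
  have rowMono : ∀ i j k, k ≤ j → j < lam i → T i k ≤ T i j := by
    intro i j
    induction j with
    | zero =>
      intro k hk _
      have : k = 0 := Nat.le_zero.mp hk
      subst this; exact le_rfl
    | succ m ih =>
      intro k hk hlt
      rcases eq_or_lt_of_le hk with rfl | h
      · exact le_rfl
      · exact le_trans (ih k (by omega) (by omega)) (hrow i m hlt)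
  set c := lam (r - 1) with hc
  set F : Finset (ℕ × ℕ) := (range r).biUnion
    (fun i => (range (lam i)).map ⟨fun j => (i, j), fun a b h => by simpa using h⟩) with hF
  have hmemF : ∀ p : ℕ × ℕ, p ∈ F ↔ p.2 < lam p.1 := by
    intro p
    simp only [hF, mem_biUnion, mem_range, mem_map, Function.Embedding.coeFn_mk]
    constructor
    · rintro ⟨i, hi, j, hj, rfl⟩; exact hj
    · intro h
      refine ⟨p.1, ?_, p.2, h, rfl⟩
      by_contra hcon
      push_neg at hcon
      rw [hlen p.1 hcon] at h; omega
  have hcardF : F.card = n * (r + 1) := by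
    rw [hF, ← hwt, Finset.card_biUnion]
    · simp
    · intro i _ i' _ hne
      simp only [Finset.disjoint_left]
      rintro p hp hp'
      simp only [mem_map, mem_range, Function.Embedding.coeFn_mk] at hp hp'
      obtain ⟨a, _, rfl⟩ := hp
      obtain ⟨b, _, hb⟩ := hp'
      exact hne (congrArg Prod.fst hb).symm
  have hcont : ∀ v, content lam T v = (F.filter (fun p => T p.1 p.2 = v)).card := by
    intro v
    have hset : {p : ℕ × ℕ | p.2 < lam p.1 ∧ T p.1 p.2 = v} =
        ↑(F.filter (fun p => T p.1 p.2 = v)) := by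
      ext p
      simp [mem_filter, hmemF p]
    rw [content, hset, Set.ncard_coe_finset]
  have hbound : ∀ p ∈ F, T p.1 p.2 ≤ r + 1 := by
    set G := F.filter (fun p => T p.1 p.2 ≤ r + 1) with hGdef
    have hG : G = (Icc 1 (r + 1)).biUnion (fun v => F.filter fun p => T p.1 p.2 = v) := by
      ext p
      simp only [hGdef, mem_filter, mem_biUnion, mem_Icc]
      constructor
      · rintro ⟨hpF, hle⟩
        exact ⟨T p.1 p.2, ⟨h1 p.1 p.2 ((hmemF p).1 hpF), hle⟩, hpF, rfl⟩
      · rintro ⟨v, ⟨hv1, hv2⟩, hpF, rfl⟩; exact ⟨hpF, hv2⟩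
    have hcardG : G.card = n * (r + 1) := by
      rw [hG, Finset.card_biUnion]
      · have heach : ∀ v ∈ Icc 1 (r + 1), (F.filter fun p => T p.1 p.2 = v).card = n := by
          intro v hv
          rw [← hcont v]
          exact hTcont v (mem_Icc.mp hv).1 (mem_Icc.mp hv).2
        rw [Finset.sum_congr rfl heach, Finset.sum_const, Nat.card_Icc, smul_eq_mul,
          show r + 1 + 1 - 1 = r + 1 from by omega, Nat.mul_comm]
      · intro v _ w _ hvw
        simp only [Finset.disjoint_left, mem_filter]
        rintro p ⟨_, rfl⟩ ⟨_, h⟩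
        exact hvw h
    have hGF : G = F :=
      Finset.eq_of_subset_of_card_le (filter_subset _ _) (by rw [hcardG, hcardF])
    intro p hp
    have hpG : p ∈ G := hGF.symm ▸ hp
    exact (mem_filter.mp hpG).2
  have bullet1 : ∀ i j, c ≤ j → j < lam i → 2 ≤ T i j := by
    intro i j hcj hji
    cases i with
    | zero =>
      by_contra hcon
      push_neg at hcon
      have hT1 : T 0 j = 1 := le_antisymm (by omega) (h1 0 j hji)
      have hsub : ((range (j + 1)).map
          ⟨fun k => ((0 : ℕ), k), fun a b h => by simpa using h⟩) ⊆
          F.filter (fun p => T p.1 p.2 = 1) := by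
        intro p hp
        simp only [mem_map, mem_range, Function.Embedding.coeFn_mk] at hp
        obtain ⟨k, hk, rfl⟩ := hp
        have hkl : k < lam 0 := by omega
        refine mem_filter.mpr ⟨(hmemF _).2 hkl, ?_⟩
        show T 0 k = 1
        have h2 := rowMono 0 j k (by omega) hji
        have h3 := h1 0 k hkl
        omega
      have hle := Finset.card_le_card hsub
      have hfn : (F.filter (fun p => T p.1 p.2 = 1)).card = n := by
        rw [← hcont 1]
        exact hTcont 1 le_rfl (by omega)
      rw [Finset.card_map, Finset.card_range, hfn] at hle
      omega
    | succ i' =>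
      have hji' : j < lam i' := lt_of_lt_of_le hji (hdec i')
      have h2 := hcol i' j hji
      have h3 := h1 i' j hji'
      omega
  refine ⟨bullet1, ⟨?_, ?_, ?_, ?_⟩, ?_⟩
  · intro i j hj
    simp only at hj ⊢
    rw [if_pos hj]
    have h2 := bullet1 i (j + c) (by omega) (by omega)
    omega
  · intro i j hj
    simp only at hj ⊢
    rw [if_pos (by omega : j < lam i - c), if_pos hj]
    have h2 := hrow i (j + c) (by omega)
    have harr : j + 1 + c = j + c + 1 := by ring
    rw [harr]
    omega
  · intro i j hj
    simp only at hj ⊢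
    have hj2 : j < lam i - c := lt_of_lt_of_le hj (by
      have := hdec i
      omega)
    rw [if_pos hj2, if_pos hj]
    have h2 := hcol i (j + c) (by omega)
    have h3 := h1 i (j + c) (by omega)
    omega
  · intro i j hj
    simp only at hj ⊢
    rw [if_neg (by omega)]
  · intro i j hj
    have h2 := hbound (i, j + c) ((hmemF _).2 (by simp; omega))
    simp only at h2
    omega
end

section
/- Let r, m ≥ 1 be integers. If T and T′ are SSYT of rectangular shape (m, m, …, m) (r rows, each of length m) with entries in {1, …, r+1}, and for each value i ∈ {1, …, r+1} the number of occurrences of i in T equals the number of occurrences of i in T′, then T = T′. In other words, a semistandard filling of an r × m rectangle with entries in {1, …, r+1} is uniquely determined by its content. -/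
open Finset

namespace RectAux

variable {r m : ℕ} {T : ℕ → ℕ → ℕ}

lemma lower (hT : IsSSYT (fun i => if i < r then m else 0) T) :
    ∀ i j, i < r → j < m → i + 1 ≤ T i j := by
  intro i
  induction i with
  | zero =>
    intro j h0 hj
    exact hT.1 0 j (by simpa [h0] using hj)
  | succ i ih =>
    intro j hi hj
    have h1 : i < r := Nat.lt_of_succ_lt hi
    have h2 := hT.2.2.1 i j (by simpa [hi] using hj)
    have h3 := ih j h1 hj
    omega

lemma chain (hT : IsSSYT (fun i => if i < r then m else 0) T) :
    ∀ d i j, i + d < r → j < m → T i j + d ≤ T (i + d) j := by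
  intro d
  induction d with
  | zero => intro i j _ _; simp
  | succ d ih =>
    intro i j hi hj
    have h1 := ih (i+1) j (by omega) hj
    have h2 := hT.2.2.1 i j (by simp only [show i + 1 < r by omega, if_true]; exact hj)
    have h3 : i + 1 + d = i + (d + 1) := by omega
    rw [h3] at h1
    omega

lemma upper (hT : IsSSYT (fun i => if i < r then m else 0) T)
    (hTle : ∀ i j, i < r → j < m → T i j ≤ r + 1) :
    ∀ i j, i < r → j < m → T i j ≤ i + 2 := by
  intro i j hi hj
  have h1 := chain hT (r - 1 - i) i j (by omega) hj
  have h2 := hTle (i + (r - 1 - i)) j (by omega) hj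
  omega

lemma rowmono (hT : IsSSYT (fun i => if i < r then m else 0) T) {i : ℕ} (hi : i < r) :
    ∀ k j, j ≤ k → k < m → T i j ≤ T i k := by
  intro k
  induction k with
  | zero => intro j hjk _; interval_cases j; exact le_refl _
  | succ k ih =>
    intro j hjk hk
    rcases Nat.eq_or_lt_of_le hjk with h | h
    · rw [h]
    · have h1 := ih j (by omega) (by omega)
      have h2 := hT.2.1 i k (by simpa [hi] using hk)
      omega

lemma dc_mem_iff (s : Finset ℕ) (hdc : ∀ j ∈ s, ∀ k, k ≤ j → k ∈ s) (n : ℕ) :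
    n ∈ s ↔ n < s.card := by
  constructor
  · intro hn
    have hsub : range (n + 1) ⊆ s := by
      intro k hk
      exact hdc n hn k (Nat.lt_succ_iff.mp (mem_range.mp hk))
    have := Finset.card_le_card hsub
    simpa using this
  · intro hn
    by_contra hns
    have hsub : s ⊆ range n := by
      intro j hj
      rw [mem_range]
      by_contra hj'
      exact hns (hdc j hj n (by omega))
    have := Finset.card_le_card hsub
    simp at this; omega

/-- count of value `i+1` in row `i` -/
noncomputable def b (T : ℕ → ℕ → ℕ) (i : ℕ) (m : ℕ) : ℕ :=
  ((range m).filter (fun j => T i j = i + 1)).card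

lemma val_iff (hT : IsSSYT (fun i => if i < r then m else 0) T)
    {i j : ℕ} (hi : i < r) (hj : j < m) :
    T i j = i + 1 ↔ j < b T i m := by
  have hdc : ∀ j' ∈ (range m).filter (fun j => T i j = i + 1), ∀ k, k ≤ j' →
      k ∈ (range m).filter (fun j => T i j = i + 1) := by
    intro j' hj' k hk
    rw [mem_filter, mem_range] at hj' ⊢
    have h1 := rowmono hT hi j' k hk hj'.1
    have h2 := lower hT i k hi (by omega)
    constructor
    · omega
    · omega
  have := dc_mem_iff _ hdc j
  rw [mem_filter, mem_range] at this
  unfold b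
  omega

lemma val_cases (hT : IsSSYT (fun i => if i < r then m else 0) T)
    (hTle : ∀ i j, i < r → j < m → T i j ≤ r + 1)
    {i j : ℕ} (hi : i < r) (hj : j < m) :
    T i j = i + 1 ∨ T i j = i + 2 := by
  have h1 := lower hT i j hi hj
  have h2 := upper hT hTle i j hi hj
  omega

lemma rowcount2 (hT : IsSSYT (fun i => if i < r then m else 0) T)
    (hTle : ∀ i j, i < r → j < m → T i j ≤ r + 1)
    {i : ℕ} (hi : i < r) :
    ((range m).filter (fun j => T i j = i + 2)).card = m - b T i m := by
  have key := Finset.card_filter_add_card_filter_not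
    (s := range m) (p := fun j => T i j = i + 1)
  have heq : (range m).filter (fun j => ¬ T i j = i + 1)
      = (range m).filter (fun j => T i j = i + 2) := by
    apply Finset.filter_congr
    intro j hj
    rw [mem_range] at hj
    have := val_cases hT hTle hi hj
    constructor
    · intro h; omega
    · intro h; omega
  rw [heq] at key
  simp only [card_range] at key
  unfold b
  omega

lemma rowcount0 (hT : IsSSYT (fun i => if i < r then m else 0) T)
    (hTle : ∀ i j, i < r → j < m → T i j ≤ r + 1)
    {i v : ℕ} (hi : i < r) (h1 : v ≠ i + 1) (h2 : v ≠ i + 2) :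
    ((range m).filter (fun j => T i j = v)).card = 0 := by
  rw [Finset.card_eq_zero, Finset.filter_eq_empty_iff]
  intro j hj
  rw [mem_range] at hj
  have := val_cases hT hTle hi hj
  omega

lemma content_eq (v : ℕ) :
    content (fun i => if i < r then m else 0) T v
      = ∑ i ∈ range r, ((range m).filter (fun j => T i j = v)).card := by
  unfold content
  have hset : {p : ℕ × ℕ | p.2 < (if p.1 < r then m else 0) ∧ T p.1 p.2 = v}
      = ↑((range r ×ˢ range m).filter fun p => T p.1 p.2 = v) := by
    ext ⟨i, j⟩
    simp only [Set.mem_setOf_eq, Finset.coe_filter, Finset.mem_product, mem_range]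
    by_cases h : i < r <;> simp [h]
  rw [hset, Set.ncard_coe_finset, Finset.card_filter, Finset.sum_product]
  exact Finset.sum_congr rfl fun i _ => (Finset.card_filter _ _).symm

lemma sum2 (hT : IsSSYT (fun i => if i < r then m else 0) T)
    (hTle : ∀ i j, i < r → j < m → T i j ≤ r + 1)
    {i : ℕ} (hi : i + 1 < r) :
    ∑ i' ∈ range r, ((range m).filter (fun j => T i' j = i + 2)).card
      = (m - b T i m) + b T (i + 1) m := by
  have hsub : ({i, i + 1} : Finset ℕ) ⊆ range r := by
    intro x hx
    simp only [mem_insert, mem_singleton] at hx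
    rw [mem_range]; omega
  have hz : ∀ x ∈ range r, x ∉ ({i, i + 1} : Finset ℕ) →
      ((range m).filter (fun j => T x j = i + 2)).card = 0 := by
    intro x hx hx'
    simp only [mem_insert, mem_singleton, not_or] at hx'
    exact rowcount0 hT hTle (mem_range.mp hx) (by omega) (by omega)
  rw [← Finset.sum_subset hsub hz,
    Finset.sum_pair (show i ≠ i + 1 by omega),
    rowcount2 hT hTle (by omega : i < r)]
  congr 1

end RectAux

/-- A semistandard filling of an `r × m` rectangle with entries in
`{1, …, r+1}` is uniquely determined by its content: if `T` and `T'` are SSYT of the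
rectangular shape with `r` rows of length `m`, with entries in `{1, …, r+1}`, and each
value `v ∈ {1, …, r+1}` occurs in `T` as often as in `T'`, then `T = T'`. -/
theorem rectangular_ssyt_determined_by_content
    (r m : ℕ) (hr : 1 ≤ r) (hm : 1 ≤ m)
    (T T' : ℕ → ℕ → ℕ)
    (hT : IsSSYT (fun i => if i < r then m else 0) T)
    (hT' : IsSSYT (fun i => if i < r then m else 0) T')
    (hTle : ∀ i j, i < r → j < m → T i j ≤ r + 1)
    (hT'le : ∀ i j, i < r → j < m → T' i j ≤ r + 1)
    (hcont : ∀ v, 1 ≤ v → v ≤ r + 1 →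
      content (fun i => if i < r then m else 0) T v =
      content (fun i => if i < r then m else 0) T' v) :
    T = T' := by
  have hb : ∀ i, i < r → RectAux.b T i m = RectAux.b T' i m := by
    intro i
    induction i with
    | zero =>
      intro h0
      have hc := hcont 1 le_rfl (by omega)
      rw [RectAux.content_eq, RectAux.content_eq] at hc
      have hL : ∀ (S : ℕ → ℕ → ℕ), IsSSYT (fun i => if i < r then m else 0) S →
          (∀ i j, i < r → j < m → S i j ≤ r + 1) →
          ∑ i ∈ range r, ((range m).filter (fun j => S i j = 1)).card
            = RectAux.b S 0 m := by
        intro S hS hSle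
        rw [Finset.sum_eq_single_of_mem 0 (mem_range.mpr h0)
          (fun x hx hne => RectAux.rowcount0 hS hSle (mem_range.mp hx)
            (by omega) (by omega))]
        unfold RectAux.b
        congr 1
      rw [hL T hT hTle, hL T' hT' hT'le] at hc
      exact hc
    | succ i ih =>
      intro hi1
      have hii : i < r := by omega
      have hbi := ih hii
      have hc := hcont (i + 2) (by omega) (by omega)
      rw [RectAux.content_eq, RectAux.content_eq,
        RectAux.sum2 hT hTle hi1, RectAux.sum2 hT' hT'le hi1] at hc
      omega
  funext i j
  by_cases hi : i < r
  · by_cases hj : j < m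
    · by_cases hb' : j < RectAux.b T i m
      · have e1 : T i j = i + 1 := (RectAux.val_iff hT hi hj).mpr hb'
        have e2 : T' i j = i + 1 := (RectAux.val_iff hT' hi hj).mpr
          (by rw [← hb i hi]; exact hb')
        rw [e1, e2]
      · have c1 := RectAux.val_cases hT hTle hi hj
        have c2 := RectAux.val_cases hT' hT'le hi hj
        have n1 : ¬ T i j = i + 1 := fun h => hb' ((RectAux.val_iff hT hi hj).mp h)
        have n2 : ¬ T' i j = i + 1 := fun h =>
          hb' (by rw [hb i hi]; exact (RectAux.val_iff hT' hi hj).mp h)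
        omega
    · rw [hT.2.2.2 i j (by simp only [hi, if_true]; omega),
        hT'.2.2.2 i j (by simp only [hi, if_true]; omega)]
  · rw [hT.2.2.2 i j (by simp only [hi, if_false]; omega),
      hT'.2.2.2 i j (by simp only [hi, if_false]; omega)]
end

section
/- Let r ≥ 2, p ≥ 1, and n ≥ 0 be integers, and let λ be a partition with |λ| = n(r+1), ℓ(λ) ≤ r, and λ_r < n. Set a_i = λ_i − λ_{i+1} for 1 ≤ i ≤ r−1. Then Σ_{i=1}^{r−1} i a_i > n, and moreover, as rational numbers, (p/2) · ( Σ_{1 ≤ i ≤ r−1} Σ_{1 ≤ j ≤ r−1} a_i a_j (min(i,j) − ij/r) + Σ_{i=1}^{r−1} i(r−i) a_i ) − (1/2) Σ_{i=1}^{r−1} i a_i ≥ ( p/(2r) + (p−1)/2 ) · n. -/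
open Finset

lemma abel_aux (f : ℕ → ℚ) :
    ∀ m : ℕ, ∑ i ∈ Finset.Icc 1 m, (i : ℚ) * (f (i - 1) - f i)
      = (∑ i ∈ Finset.range (m + 1), f i) - ((m : ℚ) + 1) * f m := by
  intro m
  induction m with
  | zero => simp
  | succ m ih =>
      rw [Finset.sum_Icc_succ_top (Nat.le_add_left 1 m), ih,
        Finset.sum_range_succ f (m + 1)]
      simp only [Nat.add_sub_cancel]
      push_cast
      ring

lemma final_arith (p n R S Q T : ℚ) (hp : 1 ≤ p) (hR : 2 ≤ R) (hn : 0 ≤ n)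
    (hS : n + R ≤ S) (hT : S ≤ T) (hQ : S ^ 2 ≤ Q * (R * (R - 1))) :
    (p / (2 * R) + (p - 1) / 2) * n ≤ p / 2 * (Q + T) - 1 / 2 * S := by
  have hR0 : (0:ℚ) < R := by linarith
  have hR1 : (0:ℚ) < R - 1 := by linarith
  have hp0 : (0:ℚ) < p := by linarith
  have hS0 : (0:ℚ) ≤ n + R := by linarith
  have hs2 : (n + R) ^ 2 ≤ S ^ 2 := by nlinarith
  have hnr : n * (R - 1) ≤ (n + R) ^ 2 := by nlinarith [sq_nonneg n, sq_nonneg R, mul_nonneg hn hR0.le]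
  have hQn' : n ≤ Q * R := by
    refine le_of_mul_le_mul_right ?_ hR1
    nlinarith
  have h1 : (0:ℚ) ≤ p * R * (T - S) :=
    mul_nonneg (mul_nonneg hp0.le hR0.le) (by linarith)
  have h2 : (0:ℚ) ≤ (p - 1) * R * (S - n - R) :=
    mul_nonneg (mul_nonneg (by linarith) hR0.le) (by linarith)
  have h3 : p * n ≤ p * (Q * R) := mul_le_mul_of_nonneg_left hQn' hp0.le
  have h4 : (0:ℚ) ≤ (p - 1) * R * R :=
    mul_nonneg (mul_nonneg (by linarith) hR0.le) hR0.le
  have key : p * n + (p - 1) * R * n ≤ p * R * (Q + T) - R * S := by nlinarith [h1, h2, h3, h4]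
  have h2R : (0:ℚ) < 2 * R := by linarith
  calc (p / (2 * R) + (p - 1) / 2) * n
      = (p * n + (p - 1) * R * n) / (2 * R) := by field_simp
    _ ≤ (p * R * (Q + T) - R * S) / (2 * R) := by gcongr
    _ = p / 2 * (Q + T) - 1 / 2 * S := by field_simp

/-- Let `r ≥ 2`, `p ≥ 1`, `n ≥ 0`, and let `λ` be a partition with
`|λ| = n(r+1)`, `ℓ(λ) ≤ r` and `λ_r < n`.  With `a_i = λ_i - λ_{i+1}` (`1 ≤ i ≤ r-1`,
so `a_i = lam (i-1) - lam i` in the 0-indexed convention), we have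
`Σ_{i=1}^{r-1} i a_i > n`, and moreover, in `ℚ`,
`(p/2)(Σ_{1≤i,j≤r-1} a_i a_j (min(i,j) - ij/r) + Σ_{i=1}^{r-1} i(r-i) a_i)
   - (1/2) Σ_{i=1}^{r-1} i a_i  ≥  (p/(2r) + (p-1)/2) n`. -/
theorem lowest_exponent_bound
    (r p n : ℕ) (hr : 2 ≤ r) (hp : 1 ≤ p) (lam : ℕ → ℕ)
    (hdec : ∀ i, lam (i + 1) ≤ lam i)
    (hlen : ∀ i, r ≤ i → lam i = 0)
    (hwt : ∑ i ∈ Finset.range r, lam i = n * (r + 1))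
    (hlast : lam (r - 1) < n) :
    ((n : ℚ) < ∑ i ∈ Finset.Icc 1 (r - 1),
        (i : ℚ) * ((lam (i - 1) : ℚ) - (lam i : ℚ))) ∧
    ((p : ℚ) / 2 *
        ((∑ i ∈ Finset.Icc 1 (r - 1), ∑ j ∈ Finset.Icc 1 (r - 1),
            ((lam (i - 1) : ℚ) - (lam i : ℚ)) * ((lam (j - 1) : ℚ) - (lam j : ℚ))
              * (((min i j : ℕ) : ℚ) - (i : ℚ) * (j : ℚ) / (r : ℚ)))
          + ∑ i ∈ Finset.Icc 1 (r - 1),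
              (i : ℚ) * ((r : ℚ) - (i : ℚ)) * ((lam (i - 1) : ℚ) - (lam i : ℚ)))
      - 1 / 2 * ∑ i ∈ Finset.Icc 1 (r - 1), (i : ℚ) * ((lam (i - 1) : ℚ) - (lam i : ℚ))
      ≥ ((p : ℚ) / (2 * (r : ℚ)) + ((p : ℚ) - 1) / 2) * (n : ℚ)) := by
  have hr1 : 1 ≤ r := by omega
  have hRQ : (2:ℚ) ≤ (r:ℚ) := by exact_mod_cast hr
  have hR0 : (0:ℚ) < (r:ℚ) := by linarith
  have hpQ : (1:ℚ) ≤ (p:ℚ) := by exact_mod_cast hp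
  have hnQ : (0:ℚ) ≤ (n:ℚ) := Nat.cast_nonneg n
  have hrc : ((r - 1 : ℕ) : ℚ) = (r:ℚ) - 1 := by
    rw [Nat.cast_sub hr1, Nat.cast_one]
  -- nonnegativity of the differences
  have hai : ∀ i, i ∈ Finset.Icc 1 (r - 1) → (lam i : ℚ) ≤ (lam (i - 1) : ℚ) := by
    intro i hi
    rw [Finset.mem_Icc] at hi
    have h := hdec (i - 1)
    rw [Nat.sub_add_cancel hi.1] at h
    exact_mod_cast h
  -- the value of S
  have habel := abel_aux (fun i => (lam i : ℚ)) (r - 1)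
  rw [Nat.sub_add_cancel hr1] at habel
  -- habel already beta-reduced
  have hwtQ : (∑ i ∈ Finset.range r, (lam i : ℚ)) = (n : ℚ) * ((r : ℚ) + 1) := by
    exact_mod_cast hwt
  have hlQ : (lam (r - 1) : ℚ) ≤ (n : ℚ) - 1 := by
    have h : ((lam (r - 1) + 1 : ℕ) : ℚ) ≤ (n : ℚ) := by exact_mod_cast hlast
    push_cast at h
    linarith
  have hSval : ∑ i ∈ Finset.Icc 1 (r - 1), (i : ℚ) * ((lam (i - 1) : ℚ) - (lam i : ℚ))
      = (n : ℚ) * ((r : ℚ) + 1) - (r : ℚ) * (lam (r - 1) : ℚ) := by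
    rw [habel, hwtQ, hrc]; ring
  have hSge : (n : ℚ) + (r : ℚ)
      ≤ ∑ i ∈ Finset.Icc 1 (r - 1), (i : ℚ) * ((lam (i - 1) : ℚ) - (lam i : ℚ)) := by
    rw [hSval]
    nlinarith [mul_nonneg hR0.le (show (0:ℚ) ≤ (n:ℚ) - 1 - (lam (r-1):ℚ) by linarith)]
  refine ⟨by linarith, ?_⟩
  -- T ≥ S
  have hT : ∑ i ∈ Finset.Icc 1 (r - 1), (i : ℚ) * ((lam (i - 1) : ℚ) - (lam i : ℚ))
      ≤ ∑ i ∈ Finset.Icc 1 (r - 1),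
          (i : ℚ) * ((r : ℚ) - (i : ℚ)) * ((lam (i - 1) : ℚ) - (lam i : ℚ)) := by
    refine Finset.sum_le_sum fun i hi => ?_
    have ha := hai i hi
    rw [Finset.mem_Icc] at hi
    have hiR : (i:ℚ) ≤ (r:ℚ) - 1 := by
      have h : ((i:ℕ):ℚ) ≤ ((r - 1 : ℕ):ℚ) := by exact_mod_cast hi.2
      rwa [hrc] at h
    have hi0 : (0:ℚ) ≤ (i:ℚ) := Nat.cast_nonneg i
    nlinarith [mul_nonneg (mul_nonneg hi0 (sub_nonneg.2 ha)) (show (0:ℚ) ≤ (r:ℚ) - (i:ℚ) - 1 by linarith)]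
  -- Q bound
  have hQ : (∑ i ∈ Finset.Icc 1 (r - 1), (i : ℚ) * ((lam (i - 1) : ℚ) - (lam i : ℚ))) ^ 2
      ≤ (∑ i ∈ Finset.Icc 1 (r - 1), ∑ j ∈ Finset.Icc 1 (r - 1),
            ((lam (i - 1) : ℚ) - (lam i : ℚ)) * ((lam (j - 1) : ℚ) - (lam j : ℚ))
              * (((min i j : ℕ) : ℚ) - (i : ℚ) * (j : ℚ) / (r : ℚ)))
          * ((r : ℚ) * ((r : ℚ) - 1)) := by
    rw [sq, Finset.sum_mul_sum, Finset.sum_mul]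
    refine Finset.sum_le_sum fun i hi => ?_
    rw [Finset.sum_mul]
    refine Finset.sum_le_sum fun j hj => ?_
    have hA := hai i hi
    have hB := hai j hj
    rw [Finset.mem_Icc] at hi hj
    have hmin : (i:ℚ) * (j:ℚ) ≤ ((min i j : ℕ) : ℚ) * ((r:ℚ) - 1) := by
      have h1 : i * j ≤ min i j * (r - 1) := by
        calc i * j = min i j * max i j := (min_mul_max i j).symm
          _ ≤ min i j * (r - 1) := Nat.mul_le_mul_left _ (max_le hi.2 hj.2)
      have h2 : ((i * j : ℕ) : ℚ) ≤ ((min i j * (r - 1) : ℕ) : ℚ) := by exact_mod_cast h1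
      rw [Nat.cast_mul, Nat.cast_mul, hrc] at h2
      exact h2
    have hrw : ((lam (i - 1) : ℚ) - (lam i : ℚ)) * ((lam (j - 1) : ℚ) - (lam j : ℚ))
          * (((min i j : ℕ) : ℚ) - (i : ℚ) * (j : ℚ) / (r : ℚ)) * ((r : ℚ) * ((r : ℚ) - 1))
        = ((lam (i - 1) : ℚ) - (lam i : ℚ)) * ((lam (j - 1) : ℚ) - (lam j : ℚ))
          * (((min i j : ℕ) : ℚ) * (r:ℚ) * ((r:ℚ) - 1) - (i:ℚ) * (j:ℚ) * ((r:ℚ) - 1)) := by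
      field_simp
    rw [hrw]
    nlinarith [mul_nonneg (mul_nonneg (mul_nonneg (sub_nonneg.2 hA) (sub_nonneg.2 hB)) hR0.le)
      (sub_nonneg.2 hmin)]
  exact final_arith (p:ℚ) (n:ℚ) (r:ℚ) _ _ _ hpQ hRQ hnQ hSge hT hQ
end

section
/- Let r ≥ 2, p ≥ 1, n ≥ 0 be integers. Work in the Laurent polynomial ring ℤ[u, u⁻¹], thinking of q = u^{2r}. Then Σ_λ K_{λ,(n)^{r+1}} · u^{p(rκ_λ − |λ|² + r²|λ|)} · s_λ(u^{r(r−1)}, u^{r(r−3)}, …, u^{r(1−r)}), the sum over partitions λ with |λ| = n(r+1), ℓ(λ) ≤ r, and λ_r ≥ n, equals Σ_{a ∈ C_n} d(a) · u^{p(rκ_{ν(a)} + r²|ν(a)| − |ν(a)|²)} · s_{ν(a)}(u^{r(r−1)}, u^{r(r−3)}, …, u^{r(1−r)}), where C_n = { (a_1, …, a_{r−1}) ∈ ℤ_{≥0}^{r−1} : Σ_{k=1}^{r−1} k a_k ≤ n and Σ_{k=1}^{r−1} k a_k ≡ n (mod r) }, ν(a) = (a_1 + ⋯ + a_{r−1},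 a_2 + ⋯ + a_{r−1}, …, a_{r−1}), and d(a) is the number of SSYT of shape ν(a) with entries in {1, …, r}. -/
open Finset

/-- Principal specialization `x_i = u^{r(r+1-2i)}` (1-indexed `i`) of the Schur
polynomial in `r` variables, as a Laurent polynomial in `u` (so that `x_i = q^{(r+1-2i)/2}`
with `q = u^{2r}`). -/
noncomputable def schurSpecU (r : ℕ) (lam : ℕ → ℕ) (w : ℕ) : LaurentPolynomial ℤ :=
  MvPolynomial.aeval
    (fun i : Fin r => LaurentPolynomial.T ((r : ℤ) * ((r : ℤ) - 1 - 2 * (i : ℕ)))) (schur r lam w)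

/-- Extension of a tuple `f : Fin r → ℕ` to `ℕ → ℕ` by zero. -/
def ext (r : ℕ) (f : Fin r → ℕ) : ℕ → ℕ :=
  fun i => if h : i < r then f ⟨i, h⟩ else 0

/-- The weighted sum `Σ_{k=1}^{r-1} k a_k` of a tuple `a = (a_1, …, a_{r-1})`
(0-indexed: `a ⟨k⟩` is `a_{k+1}`). -/
def wgt (r : ℕ) (a : Fin (r - 1) → ℕ) : ℕ :=
  ∑ k : Fin (r - 1), ((k : ℕ) + 1) * a k

/-- The partition `ν(a) = (a_1 + ⋯ + a_{r-1}, a_2 + ⋯ + a_{r-1}, …, a_{r-1})`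
associated to a tuple `a = (a_1, …, a_{r-1})`, 0-indexed. -/
def nu (r : ℕ) (a : Fin (r - 1) → ℕ) : ℕ → ℕ :=
  fun j => ∑ k : Fin (r - 1), if j ≤ (k : ℕ) then a k else 0


namespace St14


/-- multi-step row monotonicity -/
lemma row_mono {lam : ℕ → ℕ} {T : ℕ → ℕ → ℕ} (h : IsSSYT lam T) {i j j' : ℕ}
    (hjj : j ≤ j') (hj' : j' < lam i) : T i j ≤ T i j' := by
  induction j', hjj using Nat.le_induction with
  | base => exact le_refl _
  | succ m hm ih =>
    exact le_trans (ih (lt_trans (Nat.lt_succ_self m) hj')) (h.2.1 i m hj')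

/-- multi-step antitone for shapes -/
lemma anti_step {lam : ℕ → ℕ} (hmono : ∀ i, lam (i+1) ≤ lam i) {i i' : ℕ}
    (hii : i ≤ i') : lam i' ≤ lam i := by
  induction i', hii using Nat.le_induction with
  | base => exact le_refl _
  | succ m hm ih => exact le_trans (hmono m) ih

/-- entries are at least the (1-indexed) row number -/
lemma entry_lb {lam : ℕ → ℕ} {T : ℕ → ℕ → ℕ} (h : IsSSYT lam T)
    (hmono : ∀ i, lam (i+1) ≤ lam i) : ∀ i j, j < lam i → i + 1 ≤ T i j := by
  intro i
  induction i with
  | zero => intro j hj; exact h.1 0 j hj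
  | succ i ih =>
    intro j hj
    have h1 := h.2.2.1 i j hj
    have h2 := ih j (lt_of_lt_of_le hj (hmono i))
    omega

/-- upward-closed subset of `range c` is determined by its cardinality -/
lemma upward_filter_iff {c N : ℕ} {P : ℕ → Prop} [DecidablePred P]
    (hstep : ∀ j, j + 1 < c → P j → P (j+1))
    (hN : ((range c).filter P).card = N) {j : ℕ} (hj : j < c) :
    P j ↔ c ≤ j + N := by
  have hup : ∀ j j', j ≤ j' → j' < c → P j → P j' := by
    intro j j' hjj hj' hP
    induction j', hjj using Nat.le_induction with
    | base => exact hP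
    | succ m hm ih => exact hstep m hj' (ih (lt_trans (Nat.lt_succ_self m) hj'))
  constructor
  · intro hP
    have hsub : Ico j c ⊆ (range c).filter P := by
      intro x hx
      rw [mem_Ico] at hx
      rw [mem_filter, mem_range]
      exact ⟨hx.2, hup j x hx.1 hx.2 hP⟩
    have := Finset.card_le_card hsub
    rw [hN, Nat.card_Ico] at this
    omega
  · intro hc
    by_contra hP
    have hsub : (range c).filter P ⊆ Ico (j+1) c := by
      intro x hx
      rw [mem_filter, mem_range] at hx
      rw [mem_Ico]
      refine ⟨?_, hx.1⟩
      by_contra hxj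
      exact hP (hup x j (by omega) hj hx.2)
    have := Finset.card_le_card hsub
    rw [hN, Nat.card_Ico] at this
    omega

lemma card_filter_prod (R B : ℕ) (Q : ℕ → ℕ → Prop) [∀ i j, Decidable (Q i j)] :
    (((range R) ×ˢ (range B)).filter fun p => Q p.1 p.2).card
      = ∑ i ∈ range R, ((range B).filter (fun j => Q i j)).card := by
  rw [Finset.card_filter, Finset.sum_product]
  exact Finset.sum_congr rfl fun i _ => (Finset.card_filter _ _).symm

lemma content_eq {lam : ℕ → ℕ} (T : ℕ → ℕ → ℕ) (v R B : ℕ)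
    (hR : ∀ i, R ≤ i → lam i = 0) (hB : ∀ i, lam i ≤ B) :
    content lam T v
      = (((range R) ×ˢ (range B)).filter
          (fun p => p.2 < lam p.1 ∧ T p.1 p.2 = v)).card := by
  rw [content, ← Set.ncard_coe_finset]
  congr 1
  ext p
  simp only [Finset.coe_filter, Set.mem_setOf_eq, Finset.mem_product, Finset.mem_range,
    Set.mem_setOf_eq]
  constructor
  · rintro ⟨h1, h2⟩
    refine ⟨⟨?_, lt_of_lt_of_le h1 (hB p.1)⟩, h1, h2⟩
    by_contra hc
    have := hR p.1 (by omega)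
    omega
  · rintro ⟨-, h⟩; exact h

lemma cells_card {lam : ℕ → ℕ} (R B : ℕ) (hB : ∀ i, lam i ≤ B) :
    (((range R) ×ˢ (range B)).filter (fun p => p.2 < lam p.1)).card
      = ∑ i ∈ range R, lam i := by
  rw [card_filter_prod R B (fun i j => j < lam i)]
  apply Finset.sum_congr rfl
  intro i _
  have : (range B).filter (fun j => j < lam i) = range (lam i) := by
    ext j
    simp only [mem_filter, mem_range]
    have := hB i
    omega
  rw [this, Finset.card_range]

lemma content_le {lam : ℕ → ℕ} (T : ℕ → ℕ → ℕ) (v R B : ℕ)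
    (hR : ∀ i, R ≤ i → lam i = 0) (hB : ∀ i, lam i ≤ B) :
    content lam T v ≤ ∑ i ∈ range R, lam i := by
  rw [content_eq T v R B hR hB, ← cells_card R B hB]
  apply Finset.card_le_card
  intro p hp
  rw [Finset.mem_filter] at hp ⊢
  exact ⟨hp.1, hp.2.1⟩

lemma content_sum {lam : ℕ → ℕ} (T : ℕ → ℕ → ℕ) (R B M : ℕ)
    (hR : ∀ i, R ≤ i → lam i = 0) (hB : ∀ i, lam i ≤ B)
    (hM : ∀ i j, j < lam i → T i j ≤ M) :
    ∑ v ∈ range (M+1), content lam T v = ∑ i ∈ range R, lam i := by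
  have h1 : ∀ v ∈ range (M+1), content lam T v
      = ((((range R) ×ˢ (range B)).filter (fun p => p.2 < lam p.1)).filter
          (fun p => T p.1 p.2 = v)).card := by
    intro v _
    rw [content_eq T v R B hR hB, Finset.filter_filter]
  rw [Finset.sum_congr rfl h1, ← cells_card (lam := lam) R B hB]
  symm
  apply Finset.card_eq_sum_card_fiberwise
  intro p hp
  rw [Finset.mem_coe, mem_filter] at hp
  simp only [Finset.mem_coe, mem_range]
  have := hM p.1 p.2 hp.2
  omega

/-- content of value 0 vanishes for fillings positive on cells -/
lemma content_zero {lam : ℕ → ℕ} {T : ℕ → ℕ → ℕ}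
    (h : ∀ i j, j < lam i → 1 ≤ T i j) : content lam T 0 = 0 := by
  rw [content]
  convert Set.ncard_empty (ℕ × ℕ)
  ext p
  simp only [Set.mem_setOf_eq, Set.mem_empty_iff_false, iff_false, not_and]
  intro hp
  have := h p.1 p.2 hp
  omega

/-- sum over `range r` of a function supported on at most the two points `v-1`, `v-2` -/
lemma sum_two_support (r v : ℕ) (X Y : ℕ → ℕ) (hv : 1 ≤ v) :
    (∑ i ∈ range r, (if i+1 = v then X i else if i+2 = v then Y i else 0))
      = (if v ≤ r then X (v-1) else 0) + (if 2 ≤ v ∧ v ≤ r+1 then Y (v-2) else 0) := by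
  have hsplit : ∀ i, (if i+1 = v then X i else if i+2 = v then Y i else 0)
      = (if i = v-1 then X i else 0) + (if 2 ≤ v ∧ i = v-2 then Y i else 0) := by
    intro i
    split_ifs <;> omega
  rw [Finset.sum_congr rfl (fun i _ => hsplit i), Finset.sum_add_distrib]
  congr 1
  · rw [Finset.sum_ite_eq' (range r) (v-1) X]
    simp only [mem_range]
    split_ifs <;> omega
  · by_cases h2 : 2 ≤ v
    · simp only [h2, true_and]
      rw [Finset.sum_ite_eq' (range r) (v-2) Y]
      simp only [mem_range]
      split_ifs <;> omega
    · rw [if_neg (by omega), Finset.sum_eq_zero]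
      intro i _
      rw [if_neg (by omega)]

/-- the shape `ν + (c^r)` -/
def lamF (r c : ℕ) (ν : ℕ → ℕ) : ℕ → ℕ := fun i => if i < r then ν i + c else 0

/-- number of columns `j < c` where row `w-1` holds the "large" entry `w+1` -/
def Nfun (T : ℕ → ℕ → ℕ) (c w : ℕ) : ℕ :=
  ((range c).filter (fun j => T (w-1) j = w + 1)).card

section Master

variable {r c : ℕ} {ν : ℕ → ℕ}

lemma lamF_R : ∀ i, r ≤ i → lamF r c ν i = 0 := by
  intro i hi; rw [lamF, if_neg (by omega)]

lemma lamF_le (hν : ∀ i, ν (i+1) ≤ ν i) : ∀ i, lamF r c ν i ≤ ν 0 + c := by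
  intro i; rw [lamF]
  split_ifs
  · exact Nat.add_le_add_right (anti_step hν (Nat.zero_le i)) c
  · omega

lemma lamF_anti (hν : ∀ i, ν (i+1) ≤ ν i) : ∀ i, lamF r c ν (i+1) ≤ lamF r c ν i := by
  intro i; rw [lamF, lamF]
  split_ifs with h1 h2 h2
  · exact Nat.add_le_add_right (hν i) c
  · omega
  · omega
  · omega

lemma lamF_eq {i : ℕ} (hi : i < r) : lamF r c ν i = ν i + c := if_pos hi

lemma lamF_pos_lt {i j : ℕ} (h : j < lamF r c ν i) : i < r := by
  by_contra hc
  rw [lamF, if_neg hc] at h; omega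

/-- Master counting lemma -/
lemma master (hν : ∀ i, ν (i+1) ≤ ν i) (hνr : ∀ i, r - 1 ≤ i → ν i = 0)
     (T : ℕ → ℕ → ℕ)
    (hrect : ∀ i j, i < r → j < c → T i j = i+1 ∨ T i j = i+2)
    (v : ℕ) (hv1 : 1 ≤ v) (hv2 : v ≤ r+1) :
    content (lamF r c ν) T v
      = ((if v ≤ r then c - Nfun T c v else 0)
          + (if 2 ≤ v then Nfun T c (v-1) else 0))
        + content ν (fun i j => T i (c + j)) v := by
  have hcB : c ≤ ν 0 + c := Nat.le_add_left c (ν 0)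
  rw [content_eq T v r (ν 0 + c) (lamF_R) (lamF_le hν)]
  rw [← Finset.card_filter_add_card_filter_not
      (s := ((range r) ×ˢ (range (ν 0 + c))).filter
          (fun p => p.2 < lamF r c ν p.1 ∧ T p.1 p.2 = v))
      (fun p => p.2 < c)]
  congr 1
  -- rectangle part
  · rw [Finset.filter_filter]
    have heq : ((range r) ×ˢ (range (ν 0 + c))).filter
        (fun p => (p.2 < lamF r c ν p.1 ∧ T p.1 p.2 = v) ∧ p.2 < c)
        = ((range r) ×ˢ (range (ν 0 + c))).filter
            (fun p => T p.1 p.2 = v ∧ p.2 < c) := by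
      apply Finset.filter_congr
      intro p hp
      rw [Finset.mem_product, Finset.mem_range, Finset.mem_range] at hp
      have h1 : lamF r c ν p.1 = ν p.1 + c := lamF_eq hp.1
      constructor
      · rintro ⟨⟨-, h⟩, h2⟩; exact ⟨h, h2⟩
      · rintro ⟨h, h2⟩; exact ⟨⟨by omega, h⟩, h2⟩
    rw [heq, card_filter_prod r (ν 0 + c) (fun i j => T i j = v ∧ j < c)]
    have hrow : ∀ i ∈ range r,
        ((range (ν 0 + c)).filter (fun j => T i j = v ∧ j < c)).card
          = (if i+1 = v then c - Nfun T c (i+1)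
              else if i+2 = v then Nfun T c (i+1) else 0) := by
      intro i hi
      rw [mem_range] at hi
      have hflt : (range (ν 0 + c)).filter (fun j => T i j = v ∧ j < c)
          = (range c).filter (fun j => T i j = v) := by
        ext j
        simp only [mem_filter, mem_range]
        constructor
        · rintro ⟨-, h1, h2⟩; exact ⟨h2, h1⟩
        · rintro ⟨h1, h2⟩; exact ⟨by omega, h2, h1⟩
      rw [hflt]
      have hNi : Nfun T c (i+1) = ((range c).filter (fun j => T i j = i + 2)).card := by
        rw [Nfun]; congr 1
      by_cases h1 : i + 1 = v
      · rw [if_pos h1]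
        have : (range c).filter (fun j => T i j = v)
            = (range c).filter (fun j => ¬ (T i j = i + 2)) := by
          apply Finset.filter_congr
          intro j hj
          rw [mem_range] at hj
          rcases hrect i j hi hj with h | h <;>
          · constructor
            · intro hh; omega
            · intro hh; omega
        rw [this]
        have hsum := Finset.card_filter_add_card_filter_not
          (s := range c) (fun j => T i j = i + 2)
        rw [Finset.card_range] at hsum
        rw [hNi]
        omega
      · rw [if_neg h1]
        by_cases h2 : i + 2 = v
        · rw [if_pos h2, hNi]
          congr 1
          apply Finset.filter_congr
          intro j hj
          omega
        · rw [if_neg h2]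
          rw [Finset.card_eq_zero]
          apply Finset.filter_false_of_mem
          intro j hj
          rw [mem_range] at hj
          rcases hrect i j hi hj with h | h <;> omega
    rw [Finset.sum_congr rfl hrow,
      sum_two_support r v (fun i => c - Nfun T c (i+1)) (fun i => Nfun T c (i+1)) hv1]
    have e1 : v - 1 + 1 = v := by omega
    rw [e1]
    congr 1
    by_cases h2 : 2 ≤ v
    · rw [if_pos ⟨h2, hv2⟩, if_pos h2]
      congr 2
      omega
    · rw [if_neg (by omega), if_neg h2]
  -- strip part
  · rw [Finset.filter_filter]
    have hR' : ∀ i, r ≤ i → ν i = 0 := fun i hi => hνr i (by omega)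
    have hB' : ∀ i, ν i ≤ ν 0 := fun i => anti_step hν (Nat.zero_le i)
    rw [content_eq (lam := ν) (fun i j => T i (c + j)) v r (ν 0) hR' hB']
    apply Finset.card_nbij' (fun p => (p.1, p.2 - c)) (fun q => (q.1, c + q.2))
    · intro p hp
      simp only [Finset.mem_coe, mem_filter, Finset.mem_product, mem_range] at hp ⊢
      obtain ⟨⟨h1, h2⟩, ⟨h3, h4⟩, h5⟩ := hp
      rw [lamF_eq h1] at h3
      refine ⟨⟨h1, ?_⟩, ?_, ?_⟩
      · have := hB' p.1; omega
      · omega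
      · have : c + (p.2 - c) = p.2 := by omega
        rw [this]; exact h4
    · intro q hq
      simp only [Finset.mem_coe, mem_filter, Finset.mem_product, mem_range] at hq ⊢
      obtain ⟨⟨h1, h2⟩, h3, h4⟩ := hq
      rw [lamF_eq h1]
      exact ⟨⟨h1, by omega⟩, ⟨by omega, h4⟩, by omega⟩
    · intro p hp
      simp only [Finset.mem_coe, mem_filter, Finset.mem_product, mem_range] at hp
      obtain ⟨⟨h1, h2⟩, ⟨h3, h4⟩, h5⟩ := hp
      have : c + (p.2 - c) = p.2 := by omega
      beta_reduce
      rw [this]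
    · intro q hq
      simp only [Nat.add_sub_cancel_left]

end Master


/-- cumulative defect counts -/
noncomputable def Efun (ν : ℕ → ℕ) (c n : ℕ) (S : ℕ → ℕ → ℕ) (v : ℕ) : ℕ :=
  v * (c - n) + ∑ u ∈ range v, content ν S u

/-- construct the big tableau from the small one -/
noncomputable def conT (r c n : ℕ) (ν : ℕ → ℕ) (S : ℕ → ℕ → ℕ) : ℕ → ℕ → ℕ :=
  fun i j => if j < lamF r c ν i then
    (if j < c then (i+1) + (if c ≤ j + Efun ν c n S (i+1) then 1 else 0)
     else S i (j - c) + 1) else 0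

/-- recover the small tableau from the big one -/
def recS (c : ℕ) (ν : ℕ → ℕ) (T : ℕ → ℕ → ℕ) : ℕ → ℕ → ℕ :=
  fun i j => if j < ν i then T i (c + j) - 1 else 0

section L2

variable {r c n : ℕ} {ν : ℕ → ℕ}

lemma Estep (S : ℕ → ℕ → ℕ) (v : ℕ) :
    Efun ν c n S (v+1) = Efun ν c n S v + ((c - n) + content ν S v) := by
  rw [Efun, Efun, Finset.sum_range_succ]
  have : (v+1) * (c-n) = v * (c-n) + (c-n) := by ring
  omega

lemma Emono (S : ℕ → ℕ → ℕ) {v v' : ℕ} (h : v ≤ v') :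
    Efun ν c n S v ≤ Efun ν c n S v' := by
  induction v', h using Nat.le_induction with
  | base => exact le_refl _
  | succ m hm ih => rw [Estep]; omega

/-- key weight identity: `E r + μ_r = n` -/
lemma hEr (hr : 1 ≤ r) (hν : ∀ i, ν (i+1) ≤ ν i) (hνr : ∀ i, r - 1 ≤ i → ν i = 0)
    (hcn : n ≤ c) (hsum : n * (r+1) = r * c + ∑ i ∈ range r, ν i)
    (S : ℕ → ℕ → ℕ) (hS1 : ∀ i j, j < ν i → 1 ≤ S i j)
    (hSb : ∀ i j, j < ν i → S i j ≤ r) :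
    Efun ν c n S r + content ν S r = n := by
  have hR' : ∀ i, r ≤ i → ν i = 0 := fun i hi => hνr i (by omega)
  have hB' : ∀ i, ν i ≤ ν 0 := fun i => anti_step hν (Nat.zero_le i)
  have hcs := content_sum S r (ν 0) r hR' hB' hSb
  rw [Finset.sum_range_succ] at hcs
  rw [Efun]
  have h1 : r * (c - n) = r * c - r * n := Nat.mul_sub r c n
  have h2 : r * n ≤ r * c := Nat.mul_le_mul_left r hcn
  have h3 : n * (r+1) = r * n + n := by ring
  omega

lemma Ele (hr : 1 ≤ r) (hν : ∀ i, ν (i+1) ≤ ν i) (hνr : ∀ i, r - 1 ≤ i → ν i = 0)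
    (hcn : n ≤ c) (hsum : n * (r+1) = r * c + ∑ i ∈ range r, ν i)
    (S : ℕ → ℕ → ℕ) (hS1 : ∀ i j, j < ν i → 1 ≤ S i j)
    (hSb : ∀ i j, j < ν i → S i j ≤ r) {v : ℕ} (hv : v ≤ r) :
    Efun ν c n S v ≤ c := by
  have h1 := hEr hr hν hνr hcn hsum S hS1 hSb
  have h2 := Emono (ν := ν) (c := c) (n := n) S hv
  omega

lemma count_tail {E : ℕ} (hE : E ≤ c) :
    ((range c).filter (fun j => c ≤ j + E)).card = E := by
  have : (range c).filter (fun j => c ≤ j + E) = Ico (c - E) c := by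
    ext j
    simp only [mem_filter, mem_range, mem_Ico]
    omega
  rw [this, Nat.card_Ico]
  omega

/-- the strip of `conT S` is `S+1` -/
lemma conT_strip (hνr : ∀ i, r - 1 ≤ i → ν i = 0) (S : ℕ → ℕ → ℕ) {v : ℕ} (hv : 1 ≤ v) :
    content ν (fun i j => conT r c n ν S i (c + j)) v = content ν S (v - 1) := by
  rw [content, content]
  congr 1
  ext p
  simp only [Set.mem_setOf_eq]
  constructor
  · rintro ⟨hcell, hval⟩
    refine ⟨hcell, ?_⟩
    have hir : p.1 < r := by
      by_contra hc
      have := hνr p.1 (by omega); omega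
    rw [conT, if_pos (by rw [lamF_eq hir]; omega), if_neg (by omega)] at hval
    have : c + p.2 - c = p.2 := by omega
    rw [this] at hval
    omega
  · rintro ⟨hcell, hval⟩
    refine ⟨hcell, ?_⟩
    have hir : p.1 < r := by
      by_contra hc
      have := hνr p.1 (by omega); omega
    rw [conT, if_pos (by rw [lamF_eq hir]; omega), if_neg (by omega)]
    have : c + p.2 - c = p.2 := by omega
    rw [this]
    omega

lemma conT_rect (S : ℕ → ℕ → ℕ) {i j : ℕ} (hi : i < r) (hj : j < c) :
    conT r c n ν S i j = (i+1) + (if c ≤ j + Efun ν c n S (i+1) then 1 else 0) := by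
  rw [conT, if_pos (by rw [lamF_eq hi]; omega), if_pos hj]

lemma conT_se (S : ℕ → ℕ → ℕ) {i j : ℕ} (hj : j < lamF r c ν i) (hc : c ≤ j) :
    conT r c n ν S i j = S i (j - c) + 1 := by
  rw [conT, if_pos hj, if_neg (by omega)]

lemma conT_junk (S : ℕ → ℕ → ℕ) {i j : ℕ} (hj : lamF r c ν i ≤ j) :
    conT r c n ν S i j = 0 := by
  rw [conT, if_neg (by omega)]

lemma conT_Nfun (hr : 1 ≤ r) (hν : ∀ i, ν (i+1) ≤ ν i) (hνr : ∀ i, r - 1 ≤ i → ν i = 0)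
    (hcn : n ≤ c) (hsum : n * (r+1) = r * c + ∑ i ∈ range r, ν i)
    (S : ℕ → ℕ → ℕ) (hS1 : ∀ i j, j < ν i → 1 ≤ S i j)
    (hSb : ∀ i j, j < ν i → S i j ≤ r) {w : ℕ} (hw1 : 1 ≤ w) (hw2 : w ≤ r) :
    Nfun (conT r c n ν S) c w = Efun ν c n S w := by
  rw [Nfun]
  have hfe : (range c).filter (fun j => conT r c n ν S (w-1) j = w + 1)
      = (range c).filter (fun j => c ≤ j + Efun ν c n S w) := by
    apply Finset.filter_congr
    intro j hj
    rw [mem_range] at hj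
    rw [conT_rect S (by omega) hj]
    have hww : w - 1 + 1 = w := by omega
    rw [hww]
    split_ifs <;> omega
  rw [hfe, count_tail (Ele hr hν hνr hcn hsum S hS1 hSb hw2)]

/-- `conT S` is in the Kostka set -/
lemma conT_mem (hr : 1 ≤ r) (hν : ∀ i, ν (i+1) ≤ ν i) (hνr : ∀ i, r - 1 ≤ i → ν i = 0)
    (hcn : n ≤ c) (hsum : n * (r+1) = r * c + ∑ i ∈ range r, ν i)
    (S : ℕ → ℕ → ℕ) (hS : IsSSYT ν S) (hSb : ∀ i j, j < ν i → S i j ≤ r) :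
    IsSSYT (lamF r c ν) (conT r c n ν S)
      ∧ (∀ i j, j < lamF r c ν i → conT r c n ν S i j ≤ r + 1)
      ∧ ∀ v, 1 ≤ v → v ≤ r + 1 → content (lamF r c ν) (conT r c n ν S) v = n := by
  have hS1 := hS.1
  have hlb := entry_lb hS hν
  refine ⟨⟨?_, ?_, ?_, ?_⟩, ?_, ?_⟩
  · -- entries ≥ 1
    intro i j hj
    have hi : i < r := lamF_pos_lt hj
    rcases Nat.lt_or_ge j c with h1 | h1
    · rw [conT_rect S hi h1]; omega
    · rw [conT_se S hj h1]; omega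
  · -- rows weakly increasing
    intro i j hj
    have hi : i < r := lamF_pos_lt hj
    have hje : lamF r c ν i = ν i + c := lamF_eq hi
    rcases Nat.lt_or_ge (j+1) c with h1 | h1
    · rw [conT_rect S hi (by omega), conT_rect S hi h1]
      split_ifs <;> omega
    · rcases Nat.eq_or_lt_of_le h1 with h2 | h2
      · -- j + 1 = c
        rw [conT_rect S hi (by omega), conT_se S hj (by omega)]
        have hν0 : 0 < ν i := by omega
        have := hlb i 0 hν0
        have hjc : j + 1 - c = 0 := by omega
        rw [hjc]
        split_ifs <;> omega
      · -- strip
        rw [conT_se S (by omega : j < lamF r c ν i) (by omega), conT_se S hj (by omega)]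
        have hrow := hS.2.1 i (j - c) (by omega)
        have hjc : j + 1 - c = (j - c) + 1 := by omega
        rw [hjc]
        omega
  · -- columns strictly increasing
    intro i j hj
    have hi1 : i + 1 < r := lamF_pos_lt hj
    have hji : j < lamF r c ν i := lt_of_lt_of_le hj (lamF_anti hν i)
    rcases Nat.lt_or_ge j c with h1 | h1
    · rw [conT_rect S (by omega) h1, conT_rect S hi1 h1]
      have := Emono (ν := ν) (c := c) (n := n) S (show i+1 ≤ i+1+1 by omega)
      split_ifs <;> omega
    · rw [conT_se S hji h1, conT_se S hj h1]
      have hje : lamF r c ν (i+1) = ν (i+1) + c := lamF_eq hi1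
      have := hS.2.2.1 i (j - c) (by omega)
      omega
  · -- junk
    intro i j hj
    exact conT_junk S hj
  · -- entries ≤ r + 1
    intro i j hj
    have hi : i < r := lamF_pos_lt hj
    rcases Nat.lt_or_ge j c with h1 | h1
    · rw [conT_rect S hi h1]; split_ifs <;> omega
    · rw [conT_se S hj h1]
      have hje : lamF r c ν i = ν i + c := lamF_eq hi
      have := hSb i (j - c) (by omega)
      omega
  /- dead
    split_ifs with h1 h2
    · omega
    · omega
    · have hje : lamF r c ν i = ν i + c := lamF_eq hi
      have := hSb i (j - c) (by omega)
      omega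
  -/
  · -- content
    intro v hv1 hv2
    have hrect : ∀ i j, i < r → j < c →
        conT r c n ν S i j = i+1 ∨ conT r c n ν S i j = i+2 := by
      intro i j hi hj
      rw [conT_rect S hi hj]
      split_ifs <;> omega
    rw [master hν hνr _ hrect v hv1 hv2, conT_strip hνr S hv1]
    have hE0 : content ν S 0 = 0 := content_zero hS1
    rcases Nat.lt_or_ge v 2 with h2 | h2
    · -- v = 1
      have hv : v = 1 := by omega
      subst hv
      rw [if_pos hr, if_neg (by omega)]
      have hE1 : Efun ν c n S 1 = c - n := by
        rw [Efun, Finset.sum_range_one, hE0]; omega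
      rw [conT_Nfun hr hν hνr hcn hsum S hS1 hSb (le_refl 1) hr, hE1, hE0]
      omega
    · rcases Nat.lt_or_ge r v with h3 | h3
      · -- v = r + 1
        have hv : v = r + 1 := by omega
        subst hv
        rw [if_neg (by omega), if_pos h2]
        have : r + 1 - 1 = r := by omega
        rw [this, conT_Nfun hr hν hνr hcn hsum S hS1 hSb hr (le_refl r)]
        have := hEr hr hν hνr hcn hsum S hS1 hSb
        omega
      · -- 2 ≤ v ≤ r
        rw [if_pos h3, if_pos h2]
        rw [conT_Nfun hr hν hνr hcn hsum S hS1 hSb (by omega) h3,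
            conT_Nfun hr hν hνr hcn hsum S hS1 hSb (by omega) (by omega)]
        have hstep := Estep (ν := ν) (c := c) (n := n) S (v - 1)
        have hvv : v - 1 + 1 = v := by omega
        rw [hvv] at hstep
        have hle := Ele hr hν hνr hcn hsum S hS1 hSb h3
        omega

end L2

section L2b

variable {r c n : ℕ} {ν : ℕ → ℕ}

lemma recS_conT (hνr : ∀ i, r - 1 ≤ i → ν i = 0) {S : ℕ → ℕ → ℕ}
    (hS : IsSSYT ν S) : recS c ν (conT r c n ν S) = S := by
  funext i j
  rw [recS]
  by_cases hj : j < ν i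
  · have hir : i < r := by
      by_contra hc
      have := hνr i (by omega); omega
    rw [if_pos hj, conT_se S (by rw [lamF_eq hir]; omega) (by omega)]
    have : c + j - c = j := by omega
    rw [this]
    omega
  · rw [if_neg hj]
    exact (hS.2.2.2 i j (by omega)).symm

lemma rect_ub (hν : ∀ i, ν (i+1) ≤ ν i) {T : ℕ → ℕ → ℕ}
    (hT : IsSSYT (lamF r c ν) T)
    (hTb : ∀ i j, j < lamF r c ν i → T i j ≤ r + 1) :
    ∀ d i j, i + d + 1 = r → j < c → T i j ≤ i + 2 := by
  intro d
  induction d with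
  | zero =>
    intro i j hi hj
    have hir : i < r := by omega
    have := hTb i j (by rw [lamF_eq hir]; omega)
    omega
  | succ d ih =>
    intro i j hi hj
    have hi1 : i + 1 < r := by omega
    have hcol := hT.2.2.1 i j (by rw [lamF_eq hi1]; omega)
    have := ih (i+1) j (by omega) hj
    omega

lemma rect_cases (hν : ∀ i, ν (i+1) ≤ ν i) {T : ℕ → ℕ → ℕ}
    (hT : IsSSYT (lamF r c ν) T)
    (hTb : ∀ i j, j < lamF r c ν i → T i j ≤ r + 1) :
    ∀ i j, i < r → j < c → T i j = i + 1 ∨ T i j = i + 2 := by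
  intro i j hi hj
  have hlb := entry_lb hT (lamF_anti hν) i j (by rw [lamF_eq hi]; omega)
  have hub := rect_ub hν hT hTb (r - 1 - i) i j (by omega) hj
  omega

/-- the strip entries of a Kostka tableau are at least 2 -/
lemma strip_ge2 (hr : 1 ≤ r) (hν : ∀ i, ν (i+1) ≤ ν i)
    (hνr : ∀ i, r - 1 ≤ i → ν i = 0) (hcn : n ≤ c)
    {T : ℕ → ℕ → ℕ} (hT : IsSSYT (lamF r c ν) T)
    (hc1 : content (lamF r c ν) T 1 = n) :
    ∀ i j, j < ν i → 2 ≤ T i (c + j) := by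
  intro i j hj
  by_contra hcon
  have hir : i < r := by
    by_contra hc
    have := hνr i (by omega); omega
  have hcell : c + j < lamF r c ν i := by rw [lamF_eq hir]; omega
  have hlb := entry_lb hT (lamF_anti hν) i (c+j) hcell
  have hi0 : i = 0 := by omega
  subst hi0
  have hTv : T 0 (c + j) = 1 := by omega
  -- all entries in row 0 up to c+j equal 1
  have hrow : ∀ x, x ≤ c + j → T 0 x = 1 := by
    intro x hx
    have h1 := row_mono hT hx hcell
    have h2 := entry_lb hT (lamF_anti hν) 0 x (by omega)
    omega
  -- count: content of value 1 is at least c+1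
  have hcc : content (lamF r c ν) T 1
      = (((range r) ×ˢ (range (ν 0 + c))).filter
          (fun p => p.2 < lamF r c ν p.1 ∧ T p.1 p.2 = 1)).card :=
    content_eq T 1 r (ν 0 + c) lamF_R (lamF_le hν)
  have hsub : (range (c+1)).image (fun x => ((0:ℕ), x))
      ⊆ ((range r) ×ˢ (range (ν 0 + c))).filter
          (fun p => p.2 < lamF r c ν p.1 ∧ T p.1 p.2 = 1) := by
    intro p hp
    simp only [Finset.mem_image, mem_range] at hp
    obtain ⟨x, hx, rfl⟩ := hp
    have hx2 : x ≤ c + j := by omega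
    have hlam : lamF r c ν 0 = ν 0 + c := lamF_eq (by omega)
    simp only [mem_filter, Finset.mem_product, mem_range]
    refine ⟨⟨by omega, by omega⟩, by omega, hrow x hx2⟩
  have hcard : ((range (c+1)).image (fun x => ((0:ℕ), x))).card = c + 1 := by
    rw [Finset.card_image_of_injective _ (fun a b hab => by
      simpa using hab), Finset.card_range]
  have := Finset.card_le_card hsub
  omega

/-- the recovered tableau is a bounded SSYT -/
lemma recS_mem (hr : 1 ≤ r) (hν : ∀ i, ν (i+1) ≤ ν i)
    (hνr : ∀ i, r - 1 ≤ i → ν i = 0) (hcn : n ≤ c)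
    {T : ℕ → ℕ → ℕ} (hT : IsSSYT (lamF r c ν) T)
    (hTb : ∀ i j, j < lamF r c ν i → T i j ≤ r + 1)
    (hc1 : content (lamF r c ν) T 1 = n) :
    IsSSYT ν (recS c ν T) ∧ ∀ i j, j < ν i → recS c ν T i j ≤ r := by
  have h2 := strip_ge2 hr hν hνr hcn hT hc1
  have hcell : ∀ i j, j < ν i → c + j < lamF r c ν i := by
    intro i j hj
    have hir : i < r := by
      by_contra hc
      have := hνr i (by omega); omega
    rw [lamF_eq hir]; omega
  refine ⟨⟨?_, ?_, ?_, ?_⟩, ?_⟩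
  · intro i j hj
    rw [recS, if_pos hj]
    have := h2 i j hj
    omega
  · intro i j hj
    rw [recS, if_pos (by omega), recS, if_pos hj]
    have hrow := hT.2.1 i (c + j) (by have := hcell i (j+1) hj; omega)
    have := h2 i j (by omega)
    have hcj : c + (j + 1) = c + j + 1 := by omega
    rw [← hcj] at hrow
    omega
  · intro i j hj
    have hji : j < ν i := lt_of_lt_of_le hj (hν i)
    rw [recS, if_pos hji, recS, if_pos hj]
    have hcol := hT.2.2.1 i (c + j) (hcell (i+1) j hj)
    have := h2 i j hji
    omega
  · intro i j hj
    rw [recS, if_neg (by omega)]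
  · intro i j hj
    rw [recS, if_pos hj]
    have := hTb i (c+j) (hcell i j hj)
    omega

/-- strip content of `T` matches content of `recS T` (shifted by one) -/
lemma strip_content (hνr : ∀ i, r - 1 ≤ i → ν i = 0)
    {T : ℕ → ℕ → ℕ}
    (h2 : ∀ i j, j < ν i → 2 ≤ T i (c + j)) {v : ℕ} (hv : 2 ≤ v) :
    content ν (fun i j => T i (c + j)) v = content ν (recS c ν T) (v - 1) := by
  rw [content, content]
  congr 1
  ext p
  simp only [Set.mem_setOf_eq]
  constructor
  · rintro ⟨hcell, hval⟩
    refine ⟨hcell, ?_⟩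
    rw [recS, if_pos hcell]
    omega
  · rintro ⟨hcell, hval⟩
    rw [recS, if_pos hcell] at hval
    have := h2 p.1 p.2 hcell
    refine ⟨hcell, by omega⟩

lemma strip_content_one {T : ℕ → ℕ → ℕ}
    (h2 : ∀ i j, j < ν i → 2 ≤ T i (c + j)) :
    content ν (fun i j => T i (c + j)) 1 = 0 := by
  rw [content]
  convert Set.ncard_empty (ℕ × ℕ)
  ext p
  simp only [Set.mem_setOf_eq, Set.mem_empty_iff_false, iff_false, not_and]
  intro hp
  have := h2 p.1 p.2 hp
  omega

/-- `N = E` by induction -/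
lemma N_eq_E (hr : 1 ≤ r) (hν : ∀ i, ν (i+1) ≤ ν i)
    (hνr : ∀ i, r - 1 ≤ i → ν i = 0) (hcn : n ≤ c)
    {T : ℕ → ℕ → ℕ} (hT : IsSSYT (lamF r c ν) T)
    (hTb : ∀ i j, j < lamF r c ν i → T i j ≤ r + 1)
    (hcont : ∀ v, 1 ≤ v → v ≤ r + 1 → content (lamF r c ν) T v = n) :
    ∀ v, 1 ≤ v → v ≤ r → Nfun T c v = Efun ν c n (recS c ν T) v := by
  have h2 := strip_ge2 hr hν hνr hcn hT (hcont 1 (le_refl 1) (by omega))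
  have hrect := rect_cases hν hT hTb
  have hNle : ∀ w, Nfun T c w ≤ c := by
    intro w
    rw [Nfun]
    exact le_trans (Finset.card_filter_le _ _) (by rw [Finset.card_range])
  have hS0 : content ν (recS c ν T) 0 = 0 := by
    apply content_zero
    intro i j hj
    rw [recS, if_pos hj]
    have := h2 i j hj
    omega
  intro v hv1
  induction v, hv1 using Nat.le_induction with
  | base =>
    intro hvr
    have hm := master hν hνr T hrect 1 (le_refl 1) (by omega)
    rw [hcont 1 (le_refl 1) (by omega), if_pos hr, if_neg (by omega),
      strip_content_one h2] at hm
    have hE1 : Efun ν c n (recS c ν T) 1 = c - n := by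
      rw [Efun, Finset.sum_range_one, hS0]; omega
    have := hNle 1
    omega
  | succ v hv ih =>
    intro hvr
    have hm := master hν hνr T hrect (v+1) (by omega) (by omega)
    rw [hcont (v+1) (by omega) (by omega), if_pos hvr, if_pos (by omega),
      strip_content hνr h2 (by omega : 2 ≤ v + 1)] at hm
    have hsv : v + 1 - 1 = v := by omega
    rw [hsv] at hm
    have hIH := ih (by omega)
    have hstep := Estep (ν := ν) (c := c) (n := n) (recS c ν T) v
    have := hNle (v+1)
    omega

/-- `conT` recovers `T` -/
lemma conT_recS (hr : 1 ≤ r) (hν : ∀ i, ν (i+1) ≤ ν i)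
    (hνr : ∀ i, r - 1 ≤ i → ν i = 0) (hcn : n ≤ c)
    {T : ℕ → ℕ → ℕ} (hT : IsSSYT (lamF r c ν) T)
    (hTb : ∀ i j, j < lamF r c ν i → T i j ≤ r + 1)
    (hcont : ∀ v, 1 ≤ v → v ≤ r + 1 → content (lamF r c ν) T v = n) :
    conT r c n ν (recS c ν T) = T := by
  have h2 := strip_ge2 hr hν hνr hcn hT (hcont 1 (le_refl 1) (by omega))
  have hrect := rect_cases hν hT hTb
  have hNE := N_eq_E hr hν hνr hcn hT hTb hcont
  funext i j
  by_cases hj : j < lamF r c ν i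
  · have hir : i < r := lamF_pos_lt hj
    by_cases hjc : j < c
    · rw [conT_rect _ hir hjc]
      have hup : ∀ j', j' + 1 < c → T i j' = i + 1 + 1 → T i (j'+1) = i + 1 + 1 := by
        intro j' hj' hv
        have hrowm := hT.2.1 i j' (by rw [lamF_eq hir]; omega)
        rcases hrect i (j'+1) hir (by omega) with h | h <;> omega
      have hNdef : ((range c).filter (fun j' => T i j' = i + 1 + 1)).card
          = Nfun T c (i+1) := by
        rw [Nfun]
        congr 1
      have hiff := upward_filter_iff hup hNdef hjc
      rw [hNE (i+1) (by omega) (by omega)] at hiff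
      rcases hrect i j hir hjc with h | h
      · have hnc : ¬ c ≤ j + Efun ν c n (recS c ν T) (i+1) := by
          intro hcc
          have := hiff.mpr hcc
          omega
        rw [if_neg hnc, h]
      · have hcc : c ≤ j + Efun ν c n (recS c ν T) (i+1) := hiff.mp (by omega)
        rw [if_pos hcc, h]
    · -- strip
      rw [conT_se _ hj (by omega), recS, if_pos (show j - c < ν i by
        have := lamF_eq (ν := ν) (c := c) hir; omega)]
      have hcj : c + (j - c) = j := by omega
      rw [hcj]
      have hlb := entry_lb hT (lamF_anti hν) i j hj
      omega
  · rw [conT_junk _ (by omega)]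
    exact (hT.2.2.2 i j (by omega)).symm

end L2b

section L2c

variable {r c n : ℕ} {ν : ℕ → ℕ}

/-- The key Kostka-number identity. -/
lemma kostka_eq (hr : 1 ≤ r) (hν : ∀ i, ν (i+1) ≤ ν i)
    (hνr : ∀ i, r - 1 ≤ i → ν i = 0) (hcn : n ≤ c)
    (hsum : n * (r+1) = r * c + ∑ i ∈ range r, ν i) :
    kostka (lamF r c ν) n (r+1) = ssytCount ν r := by
  rw [kostka, ssytCount]
  have hset : {T : ℕ → ℕ → ℕ | IsSSYT (lamF r c ν) T
        ∧ (∀ i j, j < lamF r c ν i → T i j ≤ r+1)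
        ∧ ∀ v, 1 ≤ v → v ≤ r+1 → content (lamF r c ν) T v = n}
      = (conT r c n ν) '' {S | IsSSYT ν S ∧ ∀ i j, j < ν i → S i j ≤ r} := by
    ext T
    simp only [Set.mem_setOf_eq, Set.mem_image]
    constructor
    · rintro ⟨h1, h2, h3⟩
      exact ⟨recS c ν T, recS_mem hr hν hνr hcn h1 h2 (h3 1 (le_refl 1) (by omega)),
        conT_recS hr hν hνr hcn h1 h2 h3⟩
    · rintro ⟨S, ⟨hS, hSb⟩, rfl⟩
      exact conT_mem hr hν hνr hcn hsum S hS hSb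
  rw [hset, Set.ncard_image_of_injOn]
  intro S1 h1 S2 h2 heq
  rw [← recS_conT (c := c) (n := n) hνr h1.1, heq, recS_conT hνr h2.1]

/-- constructT for the bounded (`≤ r`) case -/
def conC (r c : ℕ) (ν : ℕ → ℕ) (S : ℕ → ℕ → ℕ) : ℕ → ℕ → ℕ :=
  fun i j => if j < lamF r c ν i then (if j < c then i+1 else S i (j-c)) else 0

def recC (c : ℕ) (ν : ℕ → ℕ) (T : ℕ → ℕ → ℕ) : ℕ → ℕ → ℕ :=
  fun i j => if j < ν i then T i (c + j) else 0

lemma conC_rect (S : ℕ → ℕ → ℕ) {i j : ℕ} (hi : i < r) (hj : j < c) :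
    conC r c ν S i j = i + 1 := by
  rw [conC, if_pos (by rw [lamF_eq hi]; omega), if_pos hj]

lemma conC_se (S : ℕ → ℕ → ℕ) {i j : ℕ} (hj : j < lamF r c ν i) (hc : c ≤ j) :
    conC r c ν S i j = S i (j - c) := by
  rw [conC, if_pos hj, if_neg (by omega)]

lemma conC_junk (S : ℕ → ℕ → ℕ) {i j : ℕ} (hj : lamF r c ν i ≤ j) :
    conC r c ν S i j = 0 := by
  rw [conC, if_neg (by omega)]

/-- master lemma for tableaux whose rectangle entries are forced -/
lemma masterC (hν : ∀ i, ν (i+1) ≤ ν i) (hνr : ∀ i, r - 1 ≤ i → ν i = 0)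
    (T : ℕ → ℕ → ℕ) (hrF : ∀ i j, i < r → j < c → T i j = i+1)
    {v : ℕ} (hv1 : 1 ≤ v) (hv2 : v ≤ r) :
    content (lamF r c ν) T v = c + content ν (fun i j => T i (c + j)) v := by
  have hN : ∀ w, 1 ≤ w → w ≤ r → Nfun T c w = 0 := by
    intro w hw1 hw2
    rw [Nfun, Finset.card_eq_zero]
    apply Finset.filter_false_of_mem
    intro j hj
    rw [mem_range] at hj
    rw [hrF (w-1) j (by omega) hj]
    omega
  rw [master hν hνr T (fun i j hi hj => Or.inl (hrF i j hi hj)) v hv1 (by omega),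
    if_pos hv2, hN v hv1 hv2]
  by_cases h2 : 2 ≤ v
  · rw [if_pos h2, hN (v-1) (by omega) (by omega)]
    omega
  · rw [if_neg h2]
    omega

/-- rectangle entries of a `≤ r`-bounded tableau are forced -/
lemma rectF (hν : ∀ i, ν (i+1) ≤ ν i) {T : ℕ → ℕ → ℕ}
    (hT : IsSSYT (lamF r c ν) T)
    (hTb : ∀ i j, j < lamF r c ν i → T i j ≤ r) :
    ∀ i j, i < r → j < c → T i j = i + 1 := by
  have hub : ∀ d i j, i + d + 1 = r → j < c → T i j ≤ i + 1 := by
    intro d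
    induction d with
    | zero =>
      intro i j hi hj
      have hir : i < r := by omega
      have := hTb i j (by rw [lamF_eq hir]; omega)
      omega
    | succ d ih =>
      intro i j hi hj
      have hi1 : i + 1 < r := by omega
      have hcol := hT.2.2.1 i j (by rw [lamF_eq hi1]; omega)
      have := ih (i+1) j (by omega) hj
      omega
  intro i j hi hj
  have hlb := entry_lb hT (lamF_anti hν) i j (by rw [lamF_eq hi]; omega)
  have := hub (r - 1 - i) i j (by omega) hj
  omega

lemma kostkaC_vanish_low (hν : ∀ i, ν (i+1) ≤ ν i)
    (hνr : ∀ i, r - 1 ≤ i → ν i = 0) (mu : Fin r → ℕ) {u : Fin r} (hu : mu u < c) :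
    kostkaC (lamF r c ν) r mu = 0 := by
  rw [kostkaC]
  convert Set.ncard_empty (ℕ → ℕ → ℕ)
  rw [Set.eq_empty_iff_forall_notMem]
  rintro T ⟨h1, h2, h3⟩
  have := h3 u
  rw [masterC hν hνr T (rectF hν h1 h2) (by omega) (by omega)] at this
  omega

lemma kostkaC_vanish_high (hr : 1 ≤ r) (hν : ∀ i, ν (i+1) ≤ ν i)
    (hνr : ∀ i, r - 1 ≤ i → ν i = 0) (mu : Fin r → ℕ) {u : Fin r}
    (hu : (∑ i ∈ range r, ν i) < mu u) :
    kostkaC ν r mu = 0 := by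
  rw [kostkaC]
  convert Set.ncard_empty (ℕ → ℕ → ℕ)
  rw [Set.eq_empty_iff_forall_notMem]
  rintro T ⟨h1, h2, h3⟩
  have hle := content_le (lam := ν) T ((u:ℕ)+1) r (ν 0)
    (fun i hi => hνr i (by omega)) (fun i => anti_step hν (Nat.zero_le i))
  rw [h3 u] at hle
  omega

lemma recC_conC (hνr : ∀ i, r - 1 ≤ i → ν i = 0) {S : ℕ → ℕ → ℕ}
    (hS : IsSSYT ν S) : recC c ν (conC r c ν S) = S := by
  funext i j
  rw [recC]
  by_cases hj : j < ν i
  · have hir : i < r := by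
      by_contra hc
      have := hνr i (by omega); omega
    rw [if_pos hj, conC_se S (by rw [lamF_eq hir]; omega) (by omega)]
    have : c + j - c = j := by omega
    rw [this]
  · rw [if_neg hj]
    exact (hS.2.2.2 i j (by omega)).symm

lemma conC_strip (hνr : ∀ i, r - 1 ≤ i → ν i = 0) (S : ℕ → ℕ → ℕ) (v : ℕ) :
    content ν (fun i j => conC r c ν S i (c + j)) v = content ν S v := by
  rw [content, content]
  congr 1
  ext p
  simp only [Set.mem_setOf_eq]
  have key : p.2 < ν p.1 → conC r c ν S p.1 (c + p.2) = S p.1 p.2 := by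
    intro hcell
    have hir : p.1 < r := by
      by_contra hc
      have := hνr p.1 (by omega); omega
    rw [conC_se S (by rw [lamF_eq hir]; omega) (by omega)]
    congr 1
    omega
  constructor
  · rintro ⟨hcell, hval⟩
    rw [key hcell] at hval
    exact ⟨hcell, hval⟩
  · rintro ⟨hcell, hval⟩
    rw [← key hcell] at hval
    exact ⟨hcell, hval⟩

lemma conC_mem (hr : 1 ≤ r) (hν : ∀ i, ν (i+1) ≤ ν i)
    (hνr : ∀ i, r - 1 ≤ i → ν i = 0) (mu : Fin r → ℕ) (hc : ∀ u, c ≤ mu u)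
    {S : ℕ → ℕ → ℕ} (hS : IsSSYT ν S) (hSb : ∀ i j, j < ν i → S i j ≤ r)
    (hScont : ∀ u : Fin r, content ν S ((u:ℕ)+1) = mu u - c) :
    IsSSYT (lamF r c ν) (conC r c ν S)
      ∧ (∀ i j, j < lamF r c ν i → conC r c ν S i j ≤ r)
      ∧ ∀ u : Fin r, content (lamF r c ν) (conC r c ν S) ((u:ℕ)+1) = mu u := by
  have hlb := entry_lb hS hν
  have hrF : ∀ i j, i < r → j < c → conC r c ν S i j = i + 1 := fun i j hi hj =>
    conC_rect S hi hj
  refine ⟨⟨?_, ?_, ?_, ?_⟩, ?_, ?_⟩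
  · intro i j hj
    have hi : i < r := lamF_pos_lt hj
    rcases Nat.lt_or_ge j c with h1 | h1
    · rw [conC_rect S hi h1]; omega
    · rw [conC_se S hj h1]
      have hje : lamF r c ν i = ν i + c := lamF_eq hi
      exact le_trans (by omega) (hlb i (j-c) (by omega))
  · intro i j hj
    have hi : i < r := lamF_pos_lt hj
    have hje : lamF r c ν i = ν i + c := lamF_eq hi
    rcases Nat.lt_or_ge (j+1) c with h1 | h1
    · rw [conC_rect S hi (by omega), conC_rect S hi h1]
    · rcases Nat.eq_or_lt_of_le h1 with h2 | h2
      · rw [conC_rect S hi (by omega), conC_se S hj (by omega)]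
        have := hlb i 0 (by omega)
        have hjc : j + 1 - c = 0 := by omega
        rw [hjc]
        omega
      · rw [conC_se S (by omega : j < lamF r c ν i) (by omega), conC_se S hj (by omega)]
        have hrow := hS.2.1 i (j - c) (by omega)
        have hjc : j + 1 - c = (j - c) + 1 := by omega
        rw [hjc]
        omega
  · intro i j hj
    have hi1 : i + 1 < r := lamF_pos_lt hj
    have hji : j < lamF r c ν i := lt_of_lt_of_le hj (lamF_anti hν i)
    rcases Nat.lt_or_ge j c with h1 | h1
    · rw [conC_rect S (by omega) h1, conC_rect S hi1 h1]; omega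
    · rw [conC_se S hji h1, conC_se S hj h1]
      have hje : lamF r c ν (i+1) = ν (i+1) + c := lamF_eq hi1
      exact hS.2.2.1 i (j - c) (by omega)
  · intro i j hj
    exact conC_junk S (by omega)
  · intro i j hj
    have hi : i < r := lamF_pos_lt hj
    rcases Nat.lt_or_ge j c with h1 | h1
    · rw [conC_rect S hi h1]; omega
    · rw [conC_se S hj h1]
      have hje : lamF r c ν i = ν i + c := lamF_eq hi
      exact hSb i (j - c) (by omega)
  · intro u
    rw [masterC hν hνr _ hrF (by omega) (by omega), conC_strip hνr S, hScont u]
    have := hc u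
    omega

lemma recC_mem (hr : 1 ≤ r) (hν : ∀ i, ν (i+1) ≤ ν i)
    (hνr : ∀ i, r - 1 ≤ i → ν i = 0) (mu : Fin r → ℕ)
    {T : ℕ → ℕ → ℕ} (hT : IsSSYT (lamF r c ν) T)
    (hTb : ∀ i j, j < lamF r c ν i → T i j ≤ r)
    (hcont : ∀ u : Fin r, content (lamF r c ν) T ((u:ℕ)+1) = mu u) :
    IsSSYT ν (recC c ν T) ∧ (∀ i j, j < ν i → recC c ν T i j ≤ r)
      ∧ ∀ u : Fin r, content ν (recC c ν T) ((u:ℕ)+1) = mu u - c := by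
  have hcell : ∀ i j, j < ν i → c + j < lamF r c ν i := by
    intro i j hj
    have hir : i < r := by
      by_contra hc
      have := hνr i (by omega); omega
    rw [lamF_eq hir]; omega
  have hlb := entry_lb hT (lamF_anti hν)
  refine ⟨⟨?_, ?_, ?_, ?_⟩, ?_, ?_⟩
  · intro i j hj
    rw [recC, if_pos hj]
    exact le_trans (by omega) (hlb i (c+j) (hcell i j hj))
  · intro i j hj
    rw [recC, if_pos (by omega), recC, if_pos hj]
    have hrow := hT.2.1 i (c + j) (by have := hcell i (j+1) hj; omega)
    have hcj : c + (j + 1) = c + j + 1 := by omega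
    rw [← hcj] at hrow
    exact hrow
  · intro i j hj
    have hji : j < ν i := lt_of_lt_of_le hj (hν i)
    rw [recC, if_pos hji, recC, if_pos hj]
    exact hT.2.2.1 i (c + j) (hcell (i+1) j hj)
  · intro i j hj
    rw [recC, if_neg (by omega)]
  · intro i j hj
    rw [recC, if_pos hj]
    exact hTb i (c+j) (hcell i j hj)
  · intro u
    have hm := masterC hν hνr T (rectF hν hT hTb) (show 1 ≤ (u:ℕ)+1 by omega)
      (show (u:ℕ)+1 ≤ r by omega)
    rw [hcont u] at hm
    have hstrip : content ν (fun i j => T i (c + j)) ((u:ℕ)+1)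
        = content ν (recC c ν T) ((u:ℕ)+1) := by
      rw [content, content]
      congr 1
      ext p
      simp only [Set.mem_setOf_eq]
      constructor
      · rintro ⟨hcl, hval⟩
        rw [recC, if_pos hcl]
        exact ⟨hcl, hval⟩
      · rintro ⟨hcl, hval⟩
        rw [recC, if_pos hcl] at hval
        exact ⟨hcl, hval⟩
    rw [hstrip] at hm
    omega

lemma conC_recC (hν : ∀ i, ν (i+1) ≤ ν i) {T : ℕ → ℕ → ℕ}
    (hT : IsSSYT (lamF r c ν) T)
    (hTb : ∀ i j, j < lamF r c ν i → T i j ≤ r) :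
    conC r c ν (recC c ν T) = T := by
  have hrF := rectF hν hT hTb
  funext i j
  by_cases hj : j < lamF r c ν i
  · have hir : i < r := lamF_pos_lt hj
    rcases Nat.lt_or_ge j c with h1 | h1
    · rw [conC_rect _ hir h1, hrF i j hir h1]
    · rw [conC_se _ hj h1, recC, if_pos (show j - c < ν i by
        have := lamF_eq (ν := ν) (c := c) hir; omega)]
      congr 1
      omega
  · rw [conC_junk _ (by omega)]
    exact (hT.2.2.2 i j (by omega)).symm

/-- Kostka-content shift identity -/
lemma kostkaC_shift (hr : 1 ≤ r) (hν : ∀ i, ν (i+1) ≤ ν i)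
    (hνr : ∀ i, r - 1 ≤ i → ν i = 0) (mu : Fin r → ℕ) (hc : ∀ u, c ≤ mu u) :
    kostkaC (lamF r c ν) r mu = kostkaC ν r (fun u => mu u - c) := by
  rw [kostkaC, kostkaC]
  have hset : {T : ℕ → ℕ → ℕ | IsSSYT (lamF r c ν) T
        ∧ (∀ i j, j < lamF r c ν i → T i j ≤ r)
        ∧ ∀ u : Fin r, content (lamF r c ν) T ((u:ℕ)+1) = mu u}
      = (conC r c ν) '' {S | IsSSYT ν S ∧ (∀ i j, j < ν i → S i j ≤ r)
          ∧ ∀ u : Fin r, content ν S ((u:ℕ)+1) = mu u - c} := by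
    ext T
    simp only [Set.mem_setOf_eq, Set.mem_image]
    constructor
    · rintro ⟨h1, h2, h3⟩
      refine ⟨recC c ν T, ?_, conC_recC hν h1 h2⟩
      obtain ⟨g1, g2, g3⟩ := recC_mem hr hν hνr mu h1 h2 h3
      exact ⟨g1, g2, g3⟩
    · rintro ⟨S, ⟨hS, hSb, hScont⟩, rfl⟩
      exact conC_mem hr hν hνr mu hc hS hSb hScont
  rw [hset, Set.ncard_image_of_injOn]
  intro S1 h1 S2 h2 heq
  rw [← recC_conC (c := c) hνr h1.1, heq, recC_conC hνr h2.1]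

end L2c


lemma T_prod {α : Type} (s : Finset α) (b : α → ℤ) :
    (∏ i ∈ s, LaurentPolynomial.T (R := ℤ) (b i))
      = LaurentPolynomial.T (∑ i ∈ s, b i) := by
  classical
  induction s using Finset.cons_induction with
  | empty => simp [LaurentPolynomial.T_zero]
  | cons a s ha ih =>
    rw [Finset.prod_cons, Finset.sum_cons, LaurentPolynomial.T_add, ih]

lemma schurSpecU_eval (r : ℕ) (lam : ℕ → ℕ) (w : ℕ) :
    schurSpecU r lam w
      = ∑ mu ∈ Fintype.piFinset (fun _ : Fin r => Finset.range (w + 1)),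
          (kostkaC lam r mu : ℤ) •
            LaurentPolynomial.T (∑ i : Fin r,
              (mu i : ℤ) * ((r : ℤ) * ((r : ℤ) - 1 - 2 * (i : ℕ)))) := by
  rw [schurSpecU, schur, map_sum]
  apply Finset.sum_congr rfl
  intro mu _
  rw [map_zsmul]
  congr 1
  rw [map_prod]
  have h1 : ∀ i : Fin r, (MvPolynomial.aeval
      (fun i : Fin r => LaurentPolynomial.T (R := ℤ)
        ((r : ℤ) * ((r : ℤ) - 1 - 2 * (i : ℕ)))))
      (MvPolynomial.X (R := ℤ) i ^ mu i)
      = LaurentPolynomial.T ((mu i : ℤ) * ((r : ℤ) * ((r : ℤ) - 1 - 2 * (i : ℕ)))) := by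
    intro i
    rw [map_pow, MvPolynomial.aeval_X, LaurentPolynomial.T_pow]
  rw [Finset.prod_congr rfl (fun i _ => h1 i), T_prod]

lemma gauss_int (r : ℕ) : (∑ i ∈ range r, (i : ℤ)) * 2 = (r : ℤ) * ((r : ℤ) - 1) := by
  induction r with
  | zero => simp
  | succ r ih =>
    rw [Finset.sum_range_succ]
    push_cast
    linarith [ih]

lemma coeff_sum_zero (r : ℕ) :
    (∑ i : Fin r, ((r : ℤ) - 1 - 2 * (i : ℕ))) = 0 := by
  have h1 : (∑ i : Fin r, ((r : ℤ) - 1 - 2 * (i : ℕ)))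
      = ∑ i ∈ range r, ((r : ℤ) - 1 - 2 * (i : ℕ)) :=
    Fin.sum_univ_eq_sum_range (fun i => ((r : ℤ) - 1 - 2 * (i : ℕ))) r
  rw [h1, Finset.sum_sub_distrib, Finset.sum_const, Finset.card_range]
  have h2 : (∑ i ∈ range r, 2 * ((i : ℕ) : ℤ)) = 2 * ∑ i ∈ range r, (i : ℤ) := by
    rw [Finset.mul_sum]
  rw [h2, nsmul_eq_mul]
  linarith [gauss_int r]

section Shift

variable {r c n : ℕ} {ν : ℕ → ℕ}

/-- principal specialization is invariant under adding the rectangle -/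
lemma schurSpecU_shift (hr : 1 ≤ r) (hν : ∀ i, ν (i+1) ≤ ν i)
    (hνr : ∀ i, r - 1 ≤ i → ν i = 0) (hcn : n ≤ c)
    (hsum : n * (r+1) = r * c + ∑ i ∈ range r, ν i) :
    schurSpecU r (lamF r c ν) (n * (r+1))
      = schurSpecU r ν (∑ i ∈ range r, ν i) := by
  set W := ∑ i ∈ range r, ν i with hW
  rw [schurSpecU_eval, schurSpecU_eval]
  set F : (Fin r → ℕ) → LaurentPolynomial ℤ := fun mu =>
    (kostkaC (lamF r c ν) r mu : ℤ) •
      LaurentPolynomial.T (∑ i : Fin r,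
        (mu i : ℤ) * ((r : ℤ) * ((r : ℤ) - 1 - 2 * (i : ℕ)))) with hF
  set addc : (Fin r → ℕ) → (Fin r → ℕ) := fun mu i => mu i + c with haddc
  have hinj : ∀ x ∈ Fintype.piFinset (fun _ : Fin r => Finset.range (W + 1)),
      ∀ y ∈ Fintype.piFinset (fun _ : Fin r => Finset.range (W + 1)),
      addc x = addc y → x = y := by
    intro x _ y _ hxy
    funext i
    have := congrFun hxy i
    simp only [haddc] at this
    omega
  have hWc : W + c ≤ n * (r+1) := by
    have h1 : c ≤ r * c := Nat.le_mul_of_pos_left c hr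
    omega
  have hsubs : Finset.image addc (Fintype.piFinset (fun _ : Fin r => Finset.range (W + 1)))
      ⊆ Fintype.piFinset (fun _ : Fin r => Finset.range (n * (r+1) + 1)) := by
    intro mu hmu
    rw [Finset.mem_image] at hmu
    obtain ⟨mu', hmu', rfl⟩ := hmu
    rw [Fintype.mem_piFinset] at hmu' ⊢
    intro i
    have := hmu' i
    rw [mem_range] at this ⊢
    simp only [haddc]
    omega
  have hvanish : ∀ mu ∈ Fintype.piFinset (fun _ : Fin r => Finset.range (n * (r+1) + 1)),
      mu ∉ Finset.image addc (Fintype.piFinset (fun _ : Fin r => Finset.range (W + 1))) →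
      F mu = 0 := by
    intro mu _ hnot
    have hk : kostkaC (lamF r c ν) r mu = 0 := by
      by_cases hlow : ∀ u, c ≤ mu u
      · rw [kostkaC_shift hr hν hνr mu hlow]
        by_cases hhigh : ∀ u : Fin r, mu u - c ≤ W
        · exfalso
          apply hnot
          rw [Finset.mem_image]
          refine ⟨fun u => mu u - c, ?_, ?_⟩
          · rw [Fintype.mem_piFinset]
            intro u
            rw [mem_range]
            have := hhigh u
            omega
          · funext u
            simp only [haddc]
            have := hlow u
            omega
        · push_neg at hhigh
          obtain ⟨u, hu⟩ := hhigh
          exact kostkaC_vanish_high hr hν hνr (fun u => mu u - c) (u := u)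
            (by simpa using hu)
      · push_neg at hlow
        obtain ⟨u, hu⟩ := hlow
        exact kostkaC_vanish_low hν hνr mu (u := u) (by omega)
    rw [hF]
    simp only [hk, Nat.cast_zero, zero_smul]
  rw [← Finset.sum_subset hsubs hvanish, Finset.sum_image hinj]
  apply Finset.sum_congr rfl
  intro mu hmu
  simp only [hF, haddc]
  have hk2 : kostkaC (lamF r c ν) r (fun i => mu i + c) = kostkaC ν r mu := by
    rw [kostkaC_shift hr hν hνr _ (fun u => by omega)]
    congr 1
    funext u
    omega
  rw [hk2]
  congr 2
  have hsplit : ∀ i : Fin r, ((mu i + c : ℕ) : ℤ) * ((r : ℤ) * ((r : ℤ) - 1 - 2 * (i : ℕ)))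
      = (mu i : ℤ) * ((r : ℤ) * ((r : ℤ) - 1 - 2 * (i : ℕ)))
        + (c : ℤ) * ((r : ℤ) * ((r : ℤ) - 1 - 2 * (i : ℕ))) := by
    intro i
    push_cast
    ring
  rw [Finset.sum_congr rfl (fun i _ => hsplit i), Finset.sum_add_distrib]
  have hzero : (∑ i : Fin r, (c : ℤ) * ((r : ℤ) * ((r : ℤ) - 1 - 2 * (i : ℕ)))) = 0 := by
    rw [← Finset.mul_sum]
    have : (∑ i : Fin r, (r : ℤ) * ((r : ℤ) - 1 - 2 * (i : ℕ)))
        = (r : ℤ) * ∑ i : Fin r, ((r : ℤ) - 1 - 2 * (i : ℕ)) := by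
      rw [Finset.mul_sum]
    rw [this, coeff_sum_zero]
    ring
  rw [hzero, add_zero]

/-- Gauss-type sum over an interval -/
lemma Ioc_sum (a cc : ℕ) (t : ℤ) :
    (∑ j ∈ Finset.Ioc a (a + cc), ((j : ℤ) - t)) * 2
      = (cc : ℤ) * (2 * (a : ℤ) + (cc : ℤ) + 1) - 2 * (cc : ℤ) * t := by
  induction cc with
  | zero => simp
  | succ cc ih =>
    have h1 : a + (cc + 1) = (a + cc) + 1 := by omega
    rw [h1, Finset.sum_Ioc_succ_top (by omega)]
    push_cast
    push_cast at ih
    linarith [ih]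

lemma Icc_one_eq_Ioc (x : ℕ) : Finset.Icc 1 x = Finset.Ioc 0 x := by
  ext j
  simp only [Finset.mem_Icc, Finset.mem_Ioc]
  omega

/-- kappa of the shifted shape -/
lemma kappa_shift :
    kappa r (lamF r c ν)
      = kappa r ν + 2 * (c : ℤ) * (∑ i ∈ range r, (ν i : ℤ))
        + (r : ℤ) * (c : ℤ) * ((c : ℤ) - (r : ℤ)) := by
  rw [kappa, kappa]
  have h1 : ∀ i ∈ range r,
      (∑ j ∈ Finset.Icc 1 (lamF r c ν i), ((j : ℤ) - ((i : ℤ) + 1)))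
        = (∑ j ∈ Finset.Icc 1 (ν i), ((j : ℤ) - ((i : ℤ) + 1)))
          + (∑ j ∈ Finset.Ioc (ν i) (ν i + c), ((j : ℤ) - ((i : ℤ) + 1))) := by
    intro i hi
    rw [mem_range] at hi
    rw [lamF_eq hi, Icc_one_eq_Ioc, Icc_one_eq_Ioc,
      ← Finset.sum_Ioc_consecutive _ (Nat.zero_le (ν i)) (Nat.le_add_right (ν i) c)]
  rw [Finset.sum_congr rfl h1, Finset.sum_add_distrib]
  have h3 : ∀ i ∈ range r,
      (∑ j ∈ Finset.Ioc (ν i) (ν i + c), ((j : ℤ) - ((i : ℤ) + 1))) * 2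
        = 2 * (c : ℤ) * (ν i : ℤ) + ((c : ℤ) * (c : ℤ) - (c : ℤ)) - 2 * (c : ℤ) * (i : ℤ) := by
    intro i _
    have := Ioc_sum (ν i) c ((i : ℤ) + 1)
    linarith [this]
  have h2 : (∑ i ∈ range r, (∑ j ∈ Finset.Ioc (ν i) (ν i + c), ((j : ℤ) - ((i : ℤ) + 1)))) * 2
      = 2 * (c : ℤ) * (∑ i ∈ range r, (ν i : ℤ))
        + (r : ℤ) * ((c : ℤ) * (c : ℤ) - (c : ℤ))
        - 2 * (c : ℤ) * (∑ i ∈ range r, (i : ℤ)) := by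
    rw [Finset.sum_mul, Finset.sum_congr rfl h3, Finset.sum_sub_distrib,
      Finset.sum_add_distrib, Finset.sum_const, Finset.card_range,
      ← Finset.mul_sum, ← Finset.mul_sum, nsmul_eq_mul]
  have hg := gauss_int r
  linear_combination h2 - (c : ℤ) * hg

end Shift



def toA (r : ℕ) (f : Fin r → ℕ) : Fin (r-1) → ℕ :=
  fun k => f ⟨(k:ℕ), by have := k.is_lt; omega⟩ - f ⟨(k:ℕ)+1, by have := k.is_lt; omega⟩

def toF (r n : ℕ) (a : Fin (r-1) → ℕ) : Fin r → ℕ :=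
  fun i => nu r a i + (n + (n - wgt r a) / r)

lemma ext_lt {r : ℕ} (f : Fin r → ℕ) {i : ℕ} (h : i < r) : ext r f i = f ⟨i, h⟩ :=
  dif_pos h

lemma ext_fin {r : ℕ} (f : Fin r → ℕ) (i : Fin r) : ext r f ↑i = f i := by
  rw [ext_lt f i.is_lt]

lemma ext_ge {r : ℕ} (f : Fin r → ℕ) {i : ℕ} (h : r ≤ i) : ext r f i = 0 :=
  dif_neg (by omega)

lemma ext_anti {r : ℕ} (f : Fin r → ℕ) (hanti : ∀ i j : Fin r, i ≤ j → f j ≤ f i)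
    {i j : ℕ} (hij : i ≤ j) (hj : j < r) : ext r f j ≤ ext r f i := by
  rw [ext_lt f hj, ext_lt f (by omega : i < r)]
  exact hanti ⟨i, by omega⟩ ⟨j, hj⟩ hij

lemma ext_sum {r : ℕ} (f : Fin r → ℕ) :
    ∑ i ∈ range r, ext r f i = ∑ i : Fin r, f i := by
  rw [← Fin.sum_univ_eq_sum_range (fun m => ext r f m) r]
  exact Finset.sum_congr rfl (fun i _ => ext_fin f i)

lemma nu_anti (r : ℕ) (a : Fin (r-1) → ℕ) (j : ℕ) : nu r a (j+1) ≤ nu r a j := by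
  apply Finset.sum_le_sum
  intro k _
  split_ifs <;> omega

lemma nu_anti' (r : ℕ) (a : Fin (r-1) → ℕ) {i j : ℕ} (hij : i ≤ j) :
    nu r a j ≤ nu r a i :=
  anti_step (fun m => nu_anti r a m) hij

lemma nu_zero (r : ℕ) (a : Fin (r-1) → ℕ) (i : ℕ) (hi : r - 1 ≤ i) : nu r a i = 0 := by
  apply Finset.sum_eq_zero
  intro k _
  rw [if_neg (by have := k.is_lt; omega)]

lemma nu_rec (r : ℕ) (a : Fin (r-1) → ℕ) {j : ℕ} (hj : j < r - 1) :
    nu r a j = a ⟨j, hj⟩ + nu r a (j+1) := by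
  rw [nu, nu]
  have h : ∀ k : Fin (r-1), (if j ≤ (k:ℕ) then a k else 0)
      = (if k = ⟨j, hj⟩ then a k else 0) + (if j+1 ≤ (k:ℕ) then a k else 0) := by
    intro k
    by_cases hk : k = ⟨j, hj⟩
    · subst hk
      simp
    · have hkj : (k:ℕ) ≠ j := fun h => hk (Fin.ext h)
      rw [if_neg hk, zero_add]
      split_ifs <;> omega
  rw [Finset.sum_congr rfl (fun k _ => h k), Finset.sum_add_distrib,
    Finset.sum_ite_eq' Finset.univ (⟨j, hj⟩ : Fin (r-1)) a, if_pos (Finset.mem_univ _)]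

lemma wgt_eq (r : ℕ) (a : Fin (r-1) → ℕ) : wgt r a = ∑ i ∈ range r, nu r a i := by
  rw [wgt]
  unfold nu
  rw [Finset.sum_comm]
  apply Finset.sum_congr rfl
  intro k _
  have hf : (range r).filter (fun i => i ≤ (k:ℕ)) = range ((k:ℕ)+1) := by
    ext i
    simp only [mem_filter, mem_range]
    have := k.is_lt
    omega
  rw [Finset.sum_ite, Finset.sum_const_zero, add_zero, Finset.sum_const, hf,
    Finset.card_range, smul_eq_mul]

lemma toA_eq (r : ℕ) (f : Fin r → ℕ) (k : Fin (r-1)) :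
    toA r f k = ext r f ↑k - ext r f (↑k+1) := by
  rw [ext_lt f (by have := k.is_lt; omega : (k:ℕ) < r),
    ext_lt f (by have := k.is_lt; omega : (k:ℕ)+1 < r)]
  rfl

lemma nu_toA (r : ℕ) (f : Fin r → ℕ) (hanti : ∀ i j : Fin r, i ≤ j → f j ≤ f i) :
    ∀ d m, m + d = r - 1 → nu r (toA r f) m = ext r f m - ext r f (r-1) := by
  intro d
  induction d with
  | zero =>
    intro m hm
    rw [show m = r - 1 by omega, nu_zero r _ (r-1) (le_refl _)]
    omega
  | succ d ih =>
    intro m hm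
    have hmr : m < r - 1 := by omega
    rw [nu_rec r (toA r f) hmr]
    have h1 : toA r f ⟨m, hmr⟩ = ext r f m - ext r f (m+1) := toA_eq r f ⟨m, hmr⟩
    rw [h1, ih (m+1) (by omega)]
    have h2 : ext r f (m+1) ≤ ext r f m := ext_anti f hanti (by omega) (by omega)
    have h3 : ext r f (r-1) ≤ ext r f (m+1) := ext_anti f hanti (by omega) (by omega)
    omega

lemma exact_div {r n W : ℕ} (hr : 1 ≤ r) (hW : W ≤ n) (hmod : W % r = n % r) :
    r * ((n - W) / r) = n - W := by
  have h1 := Nat.div_add_mod n r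
  have h2 := Nat.div_add_mod W r
  have h3 : W / r ≤ n / r := Nat.div_le_div_right hW
  have h4 : r * (n / r - W / r) = r * (n / r) - r * (W / r) := Nat.mul_sub r _ _
  have h5 : n - W = r * (n / r - W / r) := by omega
  rw [h5, Nat.mul_div_cancel_left _ (by omega : 0 < r)]

/-- the total-weight identity for `toF` -/
lemma toF_sum_aux {r n : ℕ} (hr : 1 ≤ r) (a : Fin (r-1) → ℕ)
    (hwle : wgt r a ≤ n) (hmod : wgt r a % r = n % r) :
    r * (n + (n - wgt r a) / r) + ∑ i ∈ range r, nu r a i = n * (r+1) := by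
  have h5 := exact_div hr hwle hmod
  have h6 : r * (n + (n - wgt r a) / r) = r * n + r * ((n - wgt r a) / r) :=
    Nat.mul_add r _ _
  have h7 : n * (r+1) = r * n + n := by ring
  rw [← wgt_eq]
  omega



lemma f_facts (r n : ℕ) (hr : 2 ≤ r) (f : Fin r → ℕ)
    (hanti : ∀ i j : Fin r, i ≤ j → f j ≤ f i)
    (hsumf : ∑ i, f i = n * (r+1))
    (hlast : n ≤ ext r f (r-1)) :
    (∀ m, m < r → nu r (toA r f) m = ext r f m - ext r f (r-1))
    ∧ wgt r (toA r f) + r * ext r f (r-1) = n * (r+1)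
    ∧ n + (n - wgt r (toA r f)) / r = ext r f (r-1) := by
  set C := ext r f (r-1) with hC
  have hnu : ∀ m, m < r → nu r (toA r f) m = ext r f m - C := by
    intro m hm
    exact nu_toA r f hanti (r - 1 - m) m (by omega)
  have hCle : ∀ m, m < r → C ≤ ext r f m := by
    intro m hm
    exact ext_anti f hanti (by omega) (by omega)
  have hsum2 : ∑ i ∈ range r, ext r f i = n * (r+1) := by
    rw [ext_sum, hsumf]
  have hWsplit : (∑ i ∈ range r, nu r (toA r f) i) + r * C = n * (r+1) := by
    have h1 : ∀ i ∈ range r, nu r (toA r f) i = ext r f i - C := by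
      intro i hi; rw [mem_range] at hi; exact hnu i hi
    rw [Finset.sum_congr rfl h1,
      Finset.sum_tsub_distrib _ (fun i hi => hCle i (by rw [mem_range] at hi; exact hi)),
      Finset.sum_const, Finset.card_range, smul_eq_mul, hsum2]
    have h2 : r * C ≤ ∑ i ∈ range r, ext r f i := by
      calc r * C = ∑ _i ∈ range r, C := by rw [Finset.sum_const, Finset.card_range, smul_eq_mul]
      _ ≤ ∑ i ∈ range r, ext r f i :=
        Finset.sum_le_sum (fun i hi => hCle i (by rw [mem_range] at hi; exact hi))
    rw [hsum2] at h2
    omega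
  have hwgt : wgt r (toA r f) + r * C = n * (r+1) := by
    rw [wgt_eq]; exact hWsplit
  refine ⟨hnu, hwgt, ?_⟩
  have hrn : r * n ≤ r * C := Nat.mul_le_mul_left r hlast
  have h7 : n * (r+1) = r * n + n := by ring
  have hcomm : n * r = r * n := Nat.mul_comm n r
  have h9 : n - wgt r (toA r f) = r * (C - n) := by
    have := Nat.mul_sub r C n
    omega
  rw [h9, Nat.mul_div_cancel_left _ (by omega : 0 < r)]
  omega

lemma f_wgt_le (r n : ℕ) (hr : 2 ≤ r) (f : Fin r → ℕ)
    (hlast : n ≤ ext r f (r-1))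
    (hwgt : wgt r (toA r f) + r * ext r f (r-1) = n * (r+1)) :
    wgt r (toA r f) ≤ n ∧ wgt r (toA r f) % r = n % r := by
  have hrn : r * n ≤ r * ext r f (r-1) := Nat.mul_le_mul_left r hlast
  have h7 : n * (r+1) = r * n + n := by ring
  have hcomm : n * r = r * n := Nat.mul_comm n r
  constructor
  · omega
  · have key : wgt r (toA r f) + r * ext r f (r-1) = n + n * r := by omega
    calc wgt r (toA r f) % r
        = (wgt r (toA r f) + r * ext r f (r-1)) % r := by
          rw [Nat.mul_comm r (ext r f (r-1)), Nat.add_mul_mod_self_right]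
      _ = (n + n * r) % r := by rw [key]
      _ = n % r := by rw [Nat.add_mul_mod_self_right]


end St14

open St14

/-- Let `r ≥ 2`, `p ≥ 1`, `n ≥ 0`.  In `ℤ[u, u⁻¹]` (with `q = u^{2r}`):
`Σ_λ K_{λ,(n)^{r+1}} u^{p(rκ_λ - |λ|² + r²|λ|)} s_λ(u^{r(r-1)}, …, u^{r(1-r)})`,
summed over partitions `λ ⊢ n(r+1)` with `ℓ(λ) ≤ r` and `λ_r ≥ n`, equals
`Σ_{a ∈ C_n} d(a) u^{p(rκ_{ν(a)} + r²|ν(a)| - |ν(a)|²)} s_{ν(a)}(u^{r(r-1)}, …, u^{r(1-r)})`,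
where `C_n = {a ∈ ℤ_{≥0}^{r-1} : Σ k a_k ≤ n, Σ k a_k ≡ n (mod r)}` and `d(a)` is the
number of SSYT of shape `ν(a)` with entries in `{1, …, r}`. -/
theorem rectangular_sum_eq_tuple_sum
    (r p n : ℕ) (hr : 2 ≤ r) (hp : 1 ≤ p) :
    (∑ f ∈ (Fintype.piFinset fun _ : Fin r => Finset.range (n * (r + 1) + 1)).filter
        (fun f : Fin r → ℕ => (∀ i j : Fin r, i ≤ j → f j ≤ f i) ∧
          (∑ i, f i = n * (r + 1)) ∧ (∀ i : Fin r, (i : ℕ) = r - 1 → n ≤ f i)),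
      (kostka (ext r f) n (r + 1) : ℤ) •
        (LaurentPolynomial.T ((p : ℤ) *
            ((r : ℤ) * kappa r (ext r f) - ((n * (r + 1) : ℕ) : ℤ) ^ 2
              + (r : ℤ) ^ 2 * ((n * (r + 1) : ℕ) : ℤ)))
          * schurSpecU r (ext r f) (n * (r + 1)))) =
    ∑ a ∈ (Fintype.piFinset fun _ : Fin (r - 1) => Finset.range (n + 1)).filter
        (fun a : Fin (r - 1) → ℕ => wgt r a ≤ n ∧ wgt r a % r = n % r),
      (ssytCount (nu r a) r : ℤ) •
        (LaurentPolynomial.T ((p : ℤ) *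
            ((r : ℤ) * kappa r (nu r a) + (r : ℤ) ^ 2 * ((wgt r a : ℕ) : ℤ)
              - ((wgt r a : ℕ) : ℤ) ^ 2))
          * schurSpecU r (nu r a) (wgt r a)) := by
  classical
  have hr1 : (1:ℕ) ≤ r := by omega
  refine Finset.sum_nbij' (toA r) (toF r n) ?_ ?_ ?_ ?_ ?_
  · -- toA maps LHS index set into RHS index set
    intro f hf
    rw [Finset.mem_filter] at hf ⊢
    obtain ⟨hpi, hanti, hsumf, hlastF⟩ := hf
    have hlast : n ≤ ext r f (r-1) := by
      rw [ext_lt f (by omega : r-1 < r)]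
      exact hlastF ⟨r-1, by omega⟩ rfl
    obtain ⟨hnu, hwgt, hcdiv⟩ := f_facts r n hr f hanti hsumf hlast
    obtain ⟨hwle, hmod⟩ := f_wgt_le r n hr f hlast hwgt
    refine ⟨?_, hwle, hmod⟩
    rw [Fintype.mem_piFinset]
    intro k
    rw [Finset.mem_range]
    have h1 : ((k:ℕ)+1) * toA r f k ≤ wgt r (toA r f) :=
      Finset.single_le_sum (f := fun j : Fin (r-1) => ((j:ℕ)+1) * toA r f j)
        (fun i _ => Nat.zero_le _) (Finset.mem_univ k)
    have h2 : toA r f k ≤ ((k:ℕ)+1) * toA r f k :=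
      Nat.le_mul_of_pos_left _ (by omega)
    omega
  · -- toF maps RHS index set into LHS index set
    intro a ha
    rw [Finset.mem_filter] at ha ⊢
    obtain ⟨hpi, hwle, hmod⟩ := ha
    have hrc := toF_sum_aux hr1 a hwle hmod
    have htoF : ∀ i : Fin r, toF r n a i = nu r a ↑i + (n + (n - wgt r a) / r) :=
      fun i => rfl
    have hnu0 : ∀ i : Fin r, nu r a ↑i ≤ wgt r a := by
      intro i
      rw [wgt_eq]
      calc nu r a ↑i ≤ nu r a 0 := nu_anti' r a (Nat.zero_le _)
        _ ≤ ∑ m ∈ range r, nu r a m :=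
          Finset.single_le_sum (f := fun m => nu r a m) (fun m _ => Nat.zero_le _)
            (Finset.mem_range.mpr (by omega))
    have hdle : (n - wgt r a) / r ≤ n := le_trans (Nat.div_le_self _ _) (by omega)
    refine ⟨?_, ?_, ?_, ?_⟩
    · rw [Fintype.mem_piFinset]
      intro i
      rw [Finset.mem_range, htoF i]
      have h3 : n * 3 ≤ n * (r+1) := Nat.mul_le_mul_left n (by omega)
      have := hnu0 i
      have h4 : n * 3 = n + n + n := by ring
      omega
    · intro i j hij
      rw [htoF i, htoF j]
      have : nu r a ↑j ≤ nu r a ↑i := nu_anti' r a hij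
      omega
    · rw [Finset.sum_congr rfl (fun i _ => htoF i),
        Fin.sum_univ_eq_sum_range (fun m => nu r a m + (n + (n - wgt r a) / r)) r,
        Finset.sum_add_distrib, Finset.sum_const, Finset.card_range, smul_eq_mul]
      rw [Nat.mul_add r n ((n - wgt r a) / r)] at hrc ⊢
      omega
    · intro i hi
      rw [htoF i, hi, nu_zero r a (r-1) (le_refl _)]
      generalize (n - wgt r a) / r = q
      omega
  · -- left inverse
    intro f hf
    rw [Finset.mem_filter] at hf
    obtain ⟨hpi, hanti, hsumf, hlastF⟩ := hf
    have hlast : n ≤ ext r f (r-1) := by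
      rw [ext_lt f (by omega : r-1 < r)]
      exact hlastF ⟨r-1, by omega⟩ rfl
    obtain ⟨hnu, hwgt, hcdiv⟩ := f_facts r n hr f hanti hsumf hlast
    funext i
    have h0 : toF r n (toA r f) i = nu r (toA r f) ↑i + (n + (n - wgt r (toA r f)) / r) :=
      rfl
    rw [h0, hcdiv, hnu ↑i i.is_lt, ← ext_fin f i]
    have := ext_anti f hanti (Nat.zero_le _) (i.is_lt)
    have h2 : ext r f (r-1) ≤ ext r f ↑i :=
      ext_anti f hanti (by omega) (by omega)
    omega
  · -- right inverse
    intro a ha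
    funext k
    rw [toA_eq]
    have e1 : ∀ m, m < r → ext r (toF r n a) m
        = nu r a m + (n + (n - wgt r a) / r) := by
      intro m h
      rw [ext_lt _ h]
      rfl
    rw [e1 ↑k (by have := k.is_lt; omega), e1 (↑k+1) (by have := k.is_lt; omega)]
    have hrec := nu_rec r a k.is_lt
    have heta : a ⟨(k:ℕ), k.is_lt⟩ = a k := congrArg a (Fin.eta k k.is_lt)
    omega
  · -- term equality
    intro f hf
    rw [Finset.mem_filter] at hf
    obtain ⟨hpi, hanti, hsumf, hlastF⟩ := hf
    have hlast : n ≤ ext r f (r-1) := by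
      rw [ext_lt f (by omega : r-1 < r)]
      exact hlastF ⟨r-1, by omega⟩ rfl
    obtain ⟨hnu, hwgt, hcdiv⟩ := f_facts r n hr f hanti hsumf hlast
    have hν : ∀ i, nu r (toA r f) (i+1) ≤ nu r (toA r f) i := nu_anti r (toA r f)
    have hνr : ∀ i, r - 1 ≤ i → nu r (toA r f) i = 0 := nu_zero r (toA r f)
    have hW : wgt r (toA r f) = ∑ i ∈ range r, nu r (toA r f) i := wgt_eq r (toA r f)
    have hsum' : n * (r+1) = r * (ext r f (r-1)) + ∑ i ∈ range r, nu r (toA r f) i := by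
      rw [← hW]
      omega
    have hext : ext r f = lamF r (ext r f (r-1)) (nu r (toA r f)) := by
      funext x
      by_cases hx : x < r
      · rw [lamF_eq hx, hnu x hx]
        have h2 : ext r f (r-1) ≤ ext r f x := ext_anti f hanti (by omega) (by omega)
        omega
      · rw [ext_ge f (by omega), lamF, if_neg hx]
    have hk : (kostka (ext r f) n (r + 1)) = ssytCount (nu r (toA r f)) r := by
      rw [hext]
      exact kostka_eq hr1 hν hνr hlast hsum'
    have hs : schurSpecU r (ext r f) (n * (r + 1))
        = schurSpecU r (nu r (toA r f)) (wgt r (toA r f)) := by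
      rw [hext, schurSpecU_shift hr1 hν hνr hlast hsum', hW]
    have he : ((p : ℤ) * ((r : ℤ) * kappa r (ext r f) - ((n * (r + 1) : ℕ) : ℤ) ^ 2
            + (r : ℤ) ^ 2 * ((n * (r + 1) : ℕ) : ℤ)))
        = ((p : ℤ) * ((r : ℤ) * kappa r (nu r (toA r f))
            + (r : ℤ) ^ 2 * ((wgt r (toA r f) : ℕ) : ℤ)
            - ((wgt r (toA r f) : ℕ) : ℤ) ^ 2)) := by
      rw [hext, kappa_shift]
      have hX : ((n * (r + 1) : ℕ) : ℤ)
          = (r : ℤ) * (ext r f (r-1) : ℤ) + ∑ i ∈ range r, ((nu r (toA r f) i : ℕ) : ℤ) := by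
        have := congrArg (Nat.cast : ℕ → ℤ) hsum'
        push_cast at this ⊢
        exact_mod_cast this
      have hWc : ((wgt r (toA r f) : ℕ) : ℤ)
          = ∑ i ∈ range r, ((nu r (toA r f) i : ℕ) : ℤ) := by
        have := congrArg (Nat.cast : ℕ → ℤ) hW
        push_cast at this ⊢
        exact_mod_cast this
      rw [hX, hWc]
      ring
    rw [hk, hs, he]
end
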